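/- arXiv:2108.00880 — 8 statements merged into one kernel-verified Lean document; each statement's English description precedes it below -/
import Mathlib

section
/- Let S be a nondegenerate n-dimensional simplex in ℝ^n with basic Lagrange polynomials λ_1,…,λ_{n+1}, and let Ω be a convex body in ℝ^n with Ω ⊄ S. Then ξ(Ω;S) = (n+1)·max_{1≤k≤n+1} max_{x∈Ω} (−λ_k(x)) + 1. -/
open Set MeasureTheory Finset Metric

noncomputable section

/-- The unit cube `Q_n = [0,1]^n` in `ℝ^n`. -/
def unitCube (n : ℕ) : Set (EuclideanSpace ℝ (Fin n)) :=
  {x | ∀ i, x i ∈ Set.Icc (0 : ℝ) 1}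

/-- The set of vertices of the unit cube `Q_n`. -/
def cubeVertices (n : ℕ) : Set (EuclideanSpace ℝ (Fin n)) :=
  {x | ∀ i, x i = 0 ∨ x i = 1}

/-- The closed unit Euclidean ball `B_n` in `ℝ^n`. -/
def unitBall (n : ℕ) : Set (EuclideanSpace ℝ (Fin n)) :=
  Metric.closedBall 0 1

/-- Image of a set under the homothety with center `c` and ratio `σ`. -/
def homothet {n : ℕ} (c : EuclideanSpace ℝ (Fin n)) (σ : ℝ)
    (S : Set (EuclideanSpace ℝ (Fin n))) : Set (EuclideanSpace ℝ (Fin n)) :=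
  (fun x => c + σ • (x - c)) '' S

/-- The simplex with vertex set `v` (its convex hull). -/
def simplexSet {n : ℕ} (v : Fin (n + 1) → EuclideanSpace ℝ (Fin n)) :
    Set (EuclideanSpace ℝ (Fin n)) :=
  convexHull ℝ (Set.range v)

/-- The centroid (center of gravity) of the simplex with vertices `v`. -/
def simplexCentroid {n : ℕ} (v : Fin (n + 1) → EuclideanSpace ℝ (Fin n)) :
    EuclideanSpace ℝ (Fin n) :=
  Finset.univ.centroid ℝ v

/-- `σS`: homothetic copy of the simplex `S` with center at its centroid and ratio `σ`. -/
def simplexHomothet {n : ℕ} (v : Fin (n + 1) → EuclideanSpace ℝ (Fin n)) (σ : ℝ) :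
    Set (EuclideanSpace ℝ (Fin n)) :=
  homothet (simplexCentroid v) σ (simplexSet v)

/-- The absorption index `ξ(Ω;S)`: minimal `σ ≥ 1` with `Ω ⊆ σS`. -/
def xiInd {n : ℕ} (Ω : Set (EuclideanSpace ℝ (Fin n)))
    (v : Fin (n + 1) → EuclideanSpace ℝ (Fin n)) : ℝ :=
  sInf {σ : ℝ | 1 ≤ σ ∧ Ω ⊆ simplexHomothet v σ}

/-- `α(Ω;S)`: minimal `σ > 0` such that `Ω` is contained in a translate of `σS`. -/
def alphaInd {n : ℕ} (Ω : Set (EuclideanSpace ℝ (Fin n)))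
    (v : Fin (n + 1) → EuclideanSpace ℝ (Fin n)) : ℝ :=
  sInf {σ : ℝ | 0 < σ ∧ ∃ t : EuclideanSpace ℝ (Fin n),
    Ω ⊆ (fun x => t + x) '' simplexHomothet v σ}

/-- `lam` is the family of basic Lagrange polynomials of the simplex with vertices `v`:
affine maps with `lam j (v k) = δ_{jk}`. -/
def IsLagrangeBasis {n : ℕ} (v : Fin (n + 1) → EuclideanSpace ℝ (Fin n))
    (lam : Fin (n + 1) → (EuclideanSpace ℝ (Fin n) →ᵃ[ℝ] ℝ)) : Prop :=
  ∀ j k, lam j (v k) = if j = k then (1 : ℝ) else 0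

/-- The `i`-th axial diameter of a set: maximal length of a segment contained in it
and parallel to the `i`-th coordinate axis. -/
def axialDiameter {n : ℕ} (i : Fin n) (S : Set (EuclideanSpace ℝ (Fin n))) : ℝ :=
  sSup {t : ℝ | 0 ≤ t ∧ ∃ x, x ∈ S ∧ x + t • (EuclideanSpace.single i (1 : ℝ)) ∈ S}

/-- Norm of the interpolation projector with Lagrange basis `lam`, as an operator
`C(Ω) → C(Ω)`: it equals `max_{x ∈ Ω} Σ_j |λ_j(x)|`. -/
def projNorm {n : ℕ} (Ω : Set (EuclideanSpace ℝ (Fin n)))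
    (lam : Fin (n + 1) → (EuclideanSpace ℝ (Fin n) →ᵃ[ℝ] ℝ)) : ℝ :=
  sSup ((fun x => ∑ j, |lam j x|) '' Ω)

/-- `θ_n(Ω)`: the minimal norm of an interpolation projector with nodes in `Ω`. -/
def thetaMin (n : ℕ) (Ω : Set (EuclideanSpace ℝ (Fin n))) : ℝ :=
  sInf {t : ℝ | ∃ v : Fin (n + 1) → EuclideanSpace ℝ (Fin n),
    ∃ lam : Fin (n + 1) → (EuclideanSpace ℝ (Fin n) →ᵃ[ℝ] ℝ),
      AffineIndependent ℝ v ∧ (∀ j, v j ∈ Ω) ∧ IsLagrangeBasis v lam ∧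
      t = projNorm Ω lam}

/-- `ξ_n`: minimal absorption index of the unit cube by a contained nondegenerate simplex. -/
def xiMin (n : ℕ) : ℝ :=
  sInf {t : ℝ | ∃ v : Fin (n + 1) → EuclideanSpace ℝ (Fin n),
    AffineIndependent ℝ v ∧ simplexSet v ⊆ unitCube n ∧ t = xiInd (unitCube n) v}

/-- The standardized Legendre polynomial `χ_n` (Rodrigues formula). -/
def legendreChi (n : ℕ) (t : ℝ) : ℝ :=
  (1 / (2 ^ n * (n.factorial : ℝ))) * iteratedDeriv n (fun s : ℝ => (s ^ 2 - 1) ^ n) t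

/-- The inverse of `χ_n` on the half-axis `[1, +∞)`. -/
def legendreInv (n : ℕ) (y : ℝ) : ℝ :=
  Function.invFunOn (legendreChi n) (Set.Ici 1) y

/-- `ν_n`: the maximal volume of an `n`-dimensional simplex contained in `Q_n`. -/
def maxSimplexVol (n : ℕ) : ℝ :=
  sSup {t : ℝ | ∃ v : Fin (n + 1) → EuclideanSpace ℝ (Fin n),
    AffineIndependent ℝ v ∧ simplexSet v ⊆ unitCube n ∧
    t = (volume (simplexSet v)).toReal}

/-- `h_n`: the maximal determinant of an `n×n` matrix with entries in `{0,1}`. -/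
def maxDet01 (n : ℕ) : ℝ :=
  sSup {d : ℝ | ∃ M : Matrix (Fin n) (Fin n) ℝ,
    (∀ i j, M i j = 0 ∨ M i j = 1) ∧ d = M.det}

/-- `σ_n`: the volume of a regular `n`-dimensional simplex inscribed into `B_n`. -/
def regSimplexVol (n : ℕ) : ℝ :=
  sSup {t : ℝ | ∃ v : Fin (n + 1) → EuclideanSpace ℝ (Fin n),
    AffineIndependent ℝ v ∧ (∃ e : ℝ, ∀ j k, j ≠ k → dist (v j) (v k) = e) ∧
    (∀ j, ‖v j‖ = 1) ∧ t = (volume (simplexSet v)).toReal}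

end
/-- For a nondegenerate simplex `S` with basic Lagrange polynomials `λ_k`
and a convex body `Ω ⊄ S`:  `ξ(Ω;S) = (n+1)·max_k max_{x∈Ω}(−λ_k(x)) + 1`. -/
theorem xi_eq_lagrange_formula (n : ℕ) (hn : 0 < n)
    (v : Fin (n + 1) → EuclideanSpace ℝ (Fin n)) (hv : AffineIndependent ℝ v)
    (lam : Fin (n + 1) → (EuclideanSpace ℝ (Fin n) →ᵃ[ℝ] ℝ))
    (hlam : IsLagrangeBasis v lam)
    (Ω : Set (EuclideanSpace ℝ (Fin n)))
    (hΩcomp : IsCompact Ω) (hΩconv : Convex ℝ Ω) (hΩint : (interior Ω).Nonempty)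
    (hnot : ¬ Ω ⊆ simplexSet v) :
    xiInd Ω v =
      ((n : ℝ) + 1) * sSup {y : ℝ | ∃ k : Fin (n + 1), ∃ x ∈ Ω, y = -(lam k x)} + 1 := by
  classical
  have hnpos : (0:ℝ) < (n:ℝ) + 1 := by positivity
  -- affine basis
  have hcard : Fintype.card (Fin (n+1)) = Module.finrank ℝ (EuclideanSpace ℝ (Fin n)) + 1 := by
    simp [finrank_euclideanSpace]
  have htop : affineSpan ℝ (Set.range v) = ⊤ :=
    hv.affineSpan_eq_top_iff_card_eq_finrank_add_one.mpr hcard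
  let b : AffineBasis (Fin (n+1)) ℝ (EuclideanSpace ℝ (Fin n)) := ⟨v, hv, htop⟩
  have hbv : ⇑b = v := rfl
  have hlc : ∀ k x, lam k x = b.coord k x := by
    intro k x
    conv_lhs => rw [← b.affineCombination_coord_eq_self x]
    rw [Finset.map_affineCombination _ _ _ (b.sum_coord_apply_eq_one x),
      Finset.affineCombination_eq_linear_combination _ _ _ (b.sum_coord_apply_eq_one x)]
    simp only [hbv, Function.comp, smul_eq_mul]
    simp [fun j => hlam k j, mul_ite]
  -- simplex description
  have hS : simplexSet v = {x | ∀ k, 0 ≤ lam k x} := by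
    have := b.convexHull_eq_nonneg_coord
    rw [hbv] at this
    unfold simplexSet
    rw [this]; ext x; simp [hlc]
  -- lam at centroid
  have hcent : ∀ k, lam k (simplexCentroid v) = 1/((n:ℝ)+1) := by
    intro k
    rw [simplexCentroid, Finset.centroid_def,
      Finset.map_affineCombination _ _ _
        (Finset.univ.sum_centroidWeights_eq_one_of_nonempty ℝ Finset.univ_nonempty),
      Finset.affineCombination_eq_linear_combination _ _ _
        (Finset.univ.sum_centroidWeights_eq_one_of_nonempty ℝ Finset.univ_nonempty)]
    simp only [Finset.centroidWeights_apply, Function.comp, smul_eq_mul]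
    simp [fun j => hlam k j, mul_ite, Finset.card_univ]
  -- lam under homothety
  have haff : ∀ (k : Fin (n+1)) (σ : ℝ) x,
      lam k (simplexCentroid v + σ • (x - simplexCentroid v))
        = σ * lam k x + (1-σ)/((n:ℝ)+1) := by
    intro k σ x
    set c := simplexCentroid v
    have h1 : c + σ • (x - c) = σ • (x - c) +ᵥ c := by
      simp [vadd_eq_add, add_comm]
    rw [h1, AffineMap.map_vadd]
    have h2 : (lam k).linear (x - c) = lam k x - lam k c := by
      have := (lam k).linearMap_vsub x c
      simpa [vsub_eq_sub] using this
    rw [_root_.map_smul, h2]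
    simp only [vadd_eq_add, smul_eq_mul, hcent k]
    ring
  -- homothety description
  have hHom : ∀ σ : ℝ, 0 < σ →
      simplexHomothet v σ = {y | ∀ k, (1-σ)/((n:ℝ)+1) ≤ lam k y} := by
    intro σ hσ
    ext y
    constructor
    · rintro ⟨x, hx, rfl⟩
      intro k
      rw [haff]
      have hx0 : 0 ≤ lam k x := by rw [hS] at hx; exact hx k
      nlinarith
    · intro hy
      refine ⟨simplexCentroid v + σ⁻¹ • (y - simplexCentroid v), ?_, ?_⟩
      · rw [hS]
        intro k
        rw [haff]
        have := hy k
        have h3 : σ⁻¹ * ((1-σ)/((n:ℝ)+1)) ≤ σ⁻¹ * lam k y :=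
          mul_le_mul_of_nonneg_left this (by positivity)
        have h4 : σ⁻¹ * ((1-σ)/((n:ℝ)+1)) + (1-σ⁻¹)/((n:ℝ)+1) = 0 := by
          field_simp
          ring
        linarith
      · set c := simplexCentroid v
        have : σ • ((c + σ⁻¹ • (y - c)) - c) = y - c := by
          rw [add_sub_cancel_left, smul_inv_smul₀ (ne_of_gt hσ)]
        show c + σ • ((c + σ⁻¹ • (y - c)) - c) = y
        rw [this]
        abel
  -- the sup set
  set A := {y : ℝ | ∃ k : Fin (n + 1), ∃ x ∈ Ω, y = -(lam k x)} with hA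
  have hAeq : A = ⋃ k, (fun x => -(lam k x)) '' Ω := by
    ext y
    simp only [hA, Set.mem_setOf_eq, Set.mem_iUnion, Set.mem_image]
    constructor
    · rintro ⟨k, x, hx, rfl⟩; exact ⟨k, x, hx, rfl⟩
    · rintro ⟨k, x, hx, rfl⟩; exact ⟨k, x, hx, rfl⟩
  have hAcomp : IsCompact A := by
    rw [hAeq]
    exact isCompact_iUnion fun k =>
      hΩcomp.image ((lam k).continuous_of_finiteDimensional.neg)
  have hBdd : BddAbove A := hAcomp.bddAbove
  obtain ⟨x0, hx0Ω, hx0S⟩ := Set.not_subset.mp hnot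
  have hAne : A.Nonempty := ⟨-(lam 0 x0), 0, x0, hx0Ω, rfl⟩
  set M := sSup A with hM
  have hMpos : 0 < M := by
    rw [hS] at hx0S
    simp only [Set.mem_setOf_eq, not_forall, not_le] at hx0S
    obtain ⟨k, hk⟩ := hx0S
    have : -(lam k x0) ∈ A := ⟨k, x0, hx0Ω, rfl⟩
    have := le_csSup hBdd this
    linarith
  -- set of admissible σ
  have hset : {σ : ℝ | 1 ≤ σ ∧ Ω ⊆ simplexHomothet v σ} = Set.Ici (((n:ℝ)+1) * M + 1) := by
    ext σ
    simp only [Set.mem_setOf_eq, Set.mem_Ici]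
    constructor
    · rintro ⟨h1, h2⟩
      have hσ : (0:ℝ) < σ := lt_of_lt_of_le one_pos h1
      rw [hHom σ hσ] at h2
      have hMle : M ≤ (σ-1)/((n:ℝ)+1) := by
        apply csSup_le hAne
        rintro y ⟨k, x, hx, rfl⟩
        have hthis : (1-σ)/((n:ℝ)+1) ≤ lam k x := h2 hx k
        rw [div_le_iff₀ hnpos] at hthis
        rw [le_div_iff₀ hnpos]
        linarith
      rw [le_div_iff₀ hnpos] at hMle
      nlinarith
    · intro hσ
      have h1 : (1:ℝ) ≤ σ := by nlinarith
      refine ⟨h1, ?_⟩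
      rw [hHom σ (lt_of_lt_of_le one_pos h1)]
      intro x hx k
      have hyA : -(lam k x) ∈ A := ⟨k, x, hx, rfl⟩
      have hle : -(lam k x) ≤ M := le_csSup hBdd hyA
      rw [div_le_iff₀ hnpos]
      nlinarith
  rw [xiInd, hset, csInf_Ici]
end

section
/- Let S be a nondegenerate n-dimensional simplex in ℝ^n with basic Lagrange polynomials λ_1,…,λ_{n+1}, and let Ω be a convex body in ℝ^n. Then α(Ω;S) = Σ_{j=1}^{n+1} max_{x∈Ω} (−λ_j(x)) + 1. -/
open Set MeasureTheory Finset Metric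

set_option maxHeartbeats 2000000 in
/-- For a nondegenerate simplex `S` with basic Lagrange polynomials `λ_j`
and a convex body `Ω`:  `α(Ω;S) = Σ_j max_{x∈Ω}(−λ_j(x)) + 1`. -/
theorem alpha_eq_lagrange_formula (n : ℕ) (hn : 0 < n)
    (v : Fin (n + 1) → EuclideanSpace ℝ (Fin n)) (hv : AffineIndependent ℝ v)
    (lam : Fin (n + 1) → (EuclideanSpace ℝ (Fin n) →ᵃ[ℝ] ℝ))
    (hlam : IsLagrangeBasis v lam)
    (Ω : Set (EuclideanSpace ℝ (Fin n)))
    (hΩcomp : IsCompact Ω) (hΩconv : Convex ℝ Ω) (hΩint : (interior Ω).Nonempty) :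
    alphaInd Ω v =
      (∑ j : Fin (n + 1), sSup ((fun x => -(lam j x)) '' Ω)) + 1 := by
  classical
  have hspan : affineSpan ℝ (Set.range v) = ⊤ := by
    rw [hv.affineSpan_eq_top_iff_card_eq_finrank_add_one]
    simp [finrank_euclideanSpace_fin]
  have hlam' : ∀ j k, lam j (v k) = if j = k then (1:ℝ) else 0 := hlam
  let b : AffineBasis (Fin (n + 1)) ℝ (EuclideanSpace ℝ (Fin n)) := ⟨v, hv, hspan⟩
  have hbv : ⇑b = v := rfl
  have hsumw : ∀ x, ∑ j, b.coord j x = 1 := b.sum_coord_apply_eq_one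
  have hlc : ∀ j x, lam j x = b.coord j x := by
    intro j x
    conv_lhs => rw [← b.affineCombination_coord_eq_self x]
    rw [Finset.map_affineCombination _ _ _ (hsumw x) (lam j),
        Finset.affineCombination_eq_linear_combination _ _ _ (hsumw x)]
    simp only [Function.comp, hbv, hlam', smul_eq_mul, mul_ite, mul_one, mul_zero]
    simp
  have hsum1 : ∀ x, ∑ j, lam j x = 1 := by
    intro x; simp only [hlc]; exact hsumw x
  have hhull : ∀ x, x ∈ simplexSet v ↔ ∀ j, 0 ≤ lam j x := by
    intro x
    have h1 : x ∈ convexHull ℝ (Set.range ⇑b) ↔ ∀ i, 0 ≤ b.coord i x := by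
      rw [b.convexHull_eq_nonneg_coord]; rfl
    rw [hbv] at h1
    simpa [simplexSet, hlc] using h1
  -- affine map computations
  have hvadd : ∀ (f : EuclideanSpace ℝ (Fin n) →ᵃ[ℝ] ℝ) (p u : EuclideanSpace ℝ (Fin n)),
      f (p + u) = f p + f.linear u := by
    intro f p u
    have h := f.map_vadd p u
    simp only [vadd_eq_add] at h
    rw [add_comm u p] at h
    rw [h]; ring
  have hlinsub : ∀ (f : EuclideanSpace ℝ (Fin n) →ᵃ[ℝ] ℝ)
      (p q : EuclideanSpace ℝ (Fin n)), f.linear (p - q) = f p - f q := by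
    intro f p q
    have h := f.linearMap_vsub p q
    simpa [vsub_eq_sub] using h
  have hsub : ∀ (f : EuclideanSpace ℝ (Fin n) →ᵃ[ℝ] ℝ)
      (x t : EuclideanSpace ℝ (Fin n)), f (x - t) = f x - f.linear t := by
    intro f x t
    have h := hvadd f (x - t) t
    rw [sub_add_cancel] at h
    linarith
  -- centroid coordinates
  set μ : ℝ := ((n : ℝ) + 1)⁻¹ with hμdef
  have hμpos : 0 < μ := by positivity
  have hcard1 : ((Finset.univ : Finset (Fin (n + 1))).card : ℝ)⁻¹ = μ := by
    simp [hμdef]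
  have hcne : (Finset.univ : Finset (Fin (n + 1))).card ≠ 0 := by simp
  have hw1 := Finset.sum_centroidWeights_eq_one_of_card_ne_zero ℝ
    (s := (Finset.univ : Finset (Fin (n + 1)))) hcne
  have hcent : ∀ j, lam j (simplexCentroid v) = μ := by
    intro j
    rw [simplexCentroid, Finset.centroid_def,
        Finset.map_affineCombination _ _ _ hw1 (lam j),
        Finset.affineCombination_eq_linear_combination _ _ _ hw1]
    simp only [Finset.centroidWeights_apply, Function.comp, hlam', smul_eq_mul,
      mul_ite, mul_one, mul_zero]
    rw [Finset.sum_ite_eq Finset.univ j fun _ => ((Finset.univ.card : ℝ))⁻¹]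
    simp [hcard1, hμdef]
  set c := simplexCentroid v with hc
  have hhom : ∀ (σ : ℝ) (j : Fin (n + 1)) (x : EuclideanSpace ℝ (Fin n)),
      lam j (c + σ • (x - c)) = σ * lam j x + (1 - σ) * μ := by
    intro σ j x
    rw [hvadd, (lam j).linear.map_smul, hlinsub, smul_eq_mul, hcent]
    ring
  -- membership characterization of σS
  have hmemS : ∀ {σ : ℝ}, 0 < σ → ∀ y, (y ∈ simplexHomothet v σ ↔
      ∀ j, (1 - σ) * μ ≤ lam j y) := by
    intro σ hσ y
    constructor
    · intro hy
      obtain ⟨x, hx, rfl⟩ := hy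
      intro j
      rw [hhom]
      have h0 : 0 ≤ lam j x := (hhull x).1 hx j
      nlinarith
    · intro h
      refine ⟨c + σ⁻¹ • (y - c), ?_, ?_⟩
      · rw [hhull]
        intro j
        rw [hhom]
        have hj := h j
        have hσ' : 0 < σ⁻¹ := inv_pos.mpr hσ
        nlinarith [mul_le_mul_of_nonneg_left hj hσ'.le, mul_inv_cancel₀ (ne_of_gt hσ),
          hμpos.le]
      · show c + σ • (c + σ⁻¹ • (y - c) - c) = y
        rw [add_sub_cancel_left, smul_smul, mul_inv_cancel₀ (ne_of_gt hσ), one_smul,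
          add_sub_cancel]
  -- maximizers
  have hΩne : Ω.Nonempty := hΩint.mono interior_subset
  have hzex : ∀ j : Fin (n + 1), ∃ z ∈ Ω, ∀ x ∈ Ω, -(lam j x) ≤ -(lam j z) := by
    intro j
    obtain ⟨zz, hzz, hmax⟩ := hΩcomp.exists_isMaxOn hΩne
      ((lam j).continuous_of_finiteDimensional.neg.continuousOn)
    exact ⟨zz, hzz, fun x hx => hmax hx⟩
  choose z hz hzmax using hzex
  set m : Fin (n + 1) → ℝ := fun j => sSup ((fun x => -(lam j x)) '' Ω) with hm
  have hmeq : ∀ j, m j = -(lam j (z j)) := by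
    intro j
    apply IsGreatest.csSup_eq
    constructor
    · exact ⟨z j, hz j, rfl⟩
    · rintro y ⟨x, hx, rfl⟩; exact hzmax j x hx
  have hmub : ∀ j, ∀ x ∈ Ω, -(lam j x) ≤ m j := by
    intro j x hx; rw [hmeq]; exact hzmax j x hx
  have hsumneg : ∀ x, ∑ j, -(lam j x) = -1 := by
    intro x
    rw [Finset.sum_neg_distrib, hsum1]
  -- positivity of Σ m + 1
  have hpos : 0 < (∑ j, m j) + 1 := by
    by_contra hle
    push_neg at hle
    obtain ⟨x0, hx0⟩ := hΩint
    have hx0Ω : x0 ∈ Ω := interior_subset hx0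
    have heq : ∀ x ∈ Ω, ∀ j, -(lam j x) = m j := by
      intro x hx j
      by_contra hne
      have hlt : -(lam j x) < m j := lt_of_le_of_ne (hmub j x hx) hne
      have hs : ∑ k, -(lam k x) < ∑ k, m k :=
        Finset.sum_lt_sum (fun k _ => hmub k x hx) ⟨j, Finset.mem_univ j, hlt⟩
      rw [hsumneg x] at hs
      linarith
    obtain ⟨ε, hε, hball⟩ := Metric.isOpen_iff.mp isOpen_interior x0 hx0
    set i0 : Fin (n + 1) := ⟨0, by omega⟩ with hi0
    set i1 : Fin (n + 1) := ⟨1, by omega⟩ with hi1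
    have h01 : i0 ≠ i1 := by simp [hi0, hi1, Fin.ext_iff]
    set u := v i0 - v i1 with hu
    have hlu : (lam i0).linear u = 1 := by
      rw [hu, hlinsub, hlam' i0 i0, hlam' i0 i1]
      simp [h01]
    set δ := ε / (2 * (‖u‖ + 1)) with hδ
    have hδpos : 0 < δ := by positivity
    have hmem' : x0 + δ • u ∈ Ω := by
      apply interior_subset
      apply hball
      rw [Metric.mem_ball, dist_eq_norm, add_sub_cancel_left, norm_smul,
        Real.norm_eq_abs, abs_of_pos hδpos]
      have h2 : δ * (‖u‖ + 1) = ε / 2 := by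
        rw [hδ]; field_simp
      nlinarith [norm_nonneg u]
    have e1 : lam i0 (x0 + δ • u) = lam i0 x0 + δ := by
      rw [hvadd, (lam i0).linear.map_smul, hlu, smul_eq_mul, mul_one]
    have e2 := heq _ hmem' i0
    have e3 := heq _ hx0Ω i0
    rw [e1] at e2
    linarith
  -- linear parts sum to zero
  have hlinsum : ∀ t, ∑ j, (lam j).linear t = 0 := by
    intro t
    have h1 := hsum1 ((0 : EuclideanSpace ℝ (Fin n)) + t)
    have h2 := hsum1 (0 : EuclideanSpace ℝ (Fin n))
    have h3 : ∑ j, lam j (0 + t) = ∑ j, (lam j 0 + (lam j).linear t) :=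
      Finset.sum_congr rfl fun j _ => hvadd (lam j) 0 t
    rw [Finset.sum_add_distrib, h2] at h3
    rw [h1] at h3
    linarith
  -- constructing translations with prescribed linear coordinates
  have hlin : ∀ (d : Fin (n + 1) → ℝ), (∑ j, d j = 0) → ∀ k,
      (lam k).linear (∑ j, d j • v j) = d k := by
    intro d hd k
    have h1 : (∑ j, d j • v j) = ∑ j, d j • (v j - v ⟨0, by omega⟩) := by
      simp only [smul_sub, Finset.sum_sub_distrib, ← Finset.sum_smul, hd, zero_smul,
        sub_zero]
    rw [h1, map_sum]
    have h2 : ∀ j, (lam k).linear (d j • (v j - v ⟨0, by omega⟩))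
        = d j * (lam k (v j)) - d j * (lam k (v ⟨0, by omega⟩)) := by
      intro j
      rw [(lam k).linear.map_smul, hlinsub, smul_eq_mul]
      ring
    rw [Finset.sum_congr rfl fun j _ => h2 j, Finset.sum_sub_distrib,
      ← Finset.sum_mul, hd, zero_mul, sub_zero]
    simp only [hlam', mul_ite, mul_one, mul_zero]
    rw [Finset.sum_ite_eq Finset.univ k d]
    simp
  -- the feasible set is the ray [Σ m + 1, ∞)
  have hA : {σ : ℝ | 0 < σ ∧ ∃ t : EuclideanSpace ℝ (Fin n),
      Ω ⊆ (fun x => t + x) '' simplexHomothet v σ} = Set.Ici ((∑ j, m j) + 1) := by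
    ext σ
    simp only [Set.mem_setOf_eq, Set.mem_Ici]
    constructor
    · rintro ⟨hσ, t, ht⟩
      have hkey : ∀ j, m j ≤ -((lam j).linear t) - (1 - σ) * μ := by
        intro j
        obtain ⟨y, hy, hy2⟩ := ht (hz j)
        have hyz : y = z j - t := by
          have : t + y = z j := hy2
          rw [← this]; abel
        rw [hyz] at hy
        have hmm := (hmemS hσ (z j - t)).1 hy j
        rw [hsub] at hmm
        rw [hmeq j]
        linarith
      have hsk := Finset.sum_le_sum (fun j (_ : j ∈ Finset.univ) => hkey j)
      have hval : ∑ j, (-((lam j).linear t) - (1 - σ) * μ) = σ - 1 := by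
        rw [Finset.sum_sub_distrib, Finset.sum_neg_distrib, hlinsum, neg_zero,
          Finset.sum_const, Finset.card_univ]
        simp only [nsmul_eq_mul, Fintype.card_fin]
        have hmu1 : ((n : ℝ) + 1) * μ = 1 := by
          rw [hμdef]; field_simp
        push_cast
        linear_combination (σ - 1) * hmu1
      rw [hval] at hsk
      linarith
    · intro hσge
      have hσ : 0 < σ := lt_of_lt_of_le hpos hσge
      set cf : Fin (n + 1) → ℝ := fun j => -(m j) - (1 - σ) * μ with hcf
      set s := ∑ j, cf j with hsdef
      have hs' : s = σ - 1 - ∑ j, m j := by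
        rw [hsdef]
        simp only [hcf]
        rw [Finset.sum_sub_distrib, Finset.sum_neg_distrib, Finset.sum_const,
          Finset.card_univ]
        simp only [nsmul_eq_mul, Fintype.card_fin]
        have hmu1 : ((n : ℝ) + 1) * μ = 1 := by
          rw [hμdef]; field_simp
        push_cast
        linear_combination (σ - 1) * hmu1
      have hsnn : 0 ≤ s := by rw [hs']; linarith
      set d : Fin (n + 1) → ℝ := fun j => cf j - s * μ with hdd
      have hdsum : ∑ j, d j = 0 := by
        simp only [hdd]
        rw [Finset.sum_sub_distrib, ← hsdef, Finset.sum_const, Finset.card_univ]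
        simp only [nsmul_eq_mul, Fintype.card_fin]
        have hmu1 : ((n : ℝ) + 1) * μ = 1 := by
          rw [hμdef]; field_simp
        push_cast
        linear_combination (-s) * hmu1
      refine ⟨hσ, ∑ j, d j • v j, ?_⟩
      intro x hx
      refine ⟨x - (∑ j, d j • v j), ?_, by simp⟩
      rw [hmemS hσ]
      intro j
      rw [hsub, hlin d hdsum j]
      have h1 : -(lam j x) ≤ m j := hmub j x hx
      have h2 : d j = -(m j) - (1 - σ) * μ - s * μ := rfl
      nlinarith [mul_nonneg hsnn hμpos.le]
  rw [alphaInd, hA, csInf_Ici]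
end

section
/- For every nondegenerate n-dimensional simplex S in ℝ^n, α(S) = Σ_{i=1}^{n} 1/d_i(S), where α(S) = α(Q_n;S) and d_i(S) is the i-th axial diameter of S. -/
open Set MeasureTheory Finset Metric

noncomputable section

namespace AlphaAux

open Finset

variable {n : ℕ}

lemma euc_decomp (z : EuclideanSpace ℝ (Fin n)) :
    z = ∑ i, z i • EuclideanSpace.single i (1:ℝ) := by
  ext i
  rw [show ((∑ j, z j • EuclideanSpace.single j (1:ℝ)) i)
      = ∑ j, (z j • EuclideanSpace.single j (1:ℝ)) i from by rw [WithLp.ofLp_sum, Finset.sum_apply]]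
  simp [EuclideanSpace.single_apply]

lemma aff_add (f : EuclideanSpace ℝ (Fin n) →ᵃ[ℝ] ℝ) (z x : EuclideanSpace ℝ (Fin n)) :
    f (z + x) = f.linear z + f x := by
  have := f.map_vadd x z
  simpa using this

lemma lin_sum (f : EuclideanSpace ℝ (Fin n) →ᵃ[ℝ] ℝ) (z : EuclideanSpace ℝ (Fin n)) :
    f.linear z = ∑ i, z i * f.linear (EuclideanSpace.single i 1) := by
  conv_lhs => rw [euc_decomp z]
  rw [map_sum]
  simp [smul_eq_mul]

variable (b : AffineBasis (Fin (n+1)) ℝ (EuclideanSpace ℝ (Fin n)))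

/-- Coefficient of the `i`-th coordinate in the `j`-th barycentric coordinate map. -/
def L (j : Fin (n+1)) (i : Fin n) : ℝ := (b.coord j).linear (EuclideanSpace.single i 1)

lemma coord_add_comb (j : Fin (n+1)) (x z : EuclideanSpace ℝ (Fin n)) :
    b.coord j (x + z) = b.coord j z + ∑ i, x i * L b j i := by
  rw [aff_add, lin_sum]
  simp only [L]
  ring

lemma sum_L (i : Fin n) : ∑ j, L b j i = 0 := by
  have h1 : ∑ j, b.coord j (EuclideanSpace.single i (1:ℝ) + 0) = 1 :=
    b.sum_coord_apply_eq_one _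
  have h0 : ∑ j, b.coord j (0 : EuclideanSpace ℝ (Fin n)) = 1 := b.sum_coord_apply_eq_one _
  have h2 : ∀ j, b.coord j (EuclideanSpace.single i (1:ℝ) + 0)
      = b.coord j 0 + L b j i := by
    intro j
    rw [aff_add]
    exact add_comm _ _
  rw [Finset.sum_congr rfl (fun j _ => h2 j), Finset.sum_add_distrib, h0] at h1
  linarith

lemma A_pos (i : Fin n) : 0 < ∑ j, |L b j i| := by
  rcases lt_or_ge 0 (∑ j, |L b j i|) with h | h
  · exact h
  exfalso
  have h0 : ∑ j, |L b j i| = 0 :=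
    le_antisymm h (Finset.sum_nonneg fun _ _ => abs_nonneg _)
  have hz : ∀ j, L b j i = 0 := by
    intro j
    have := (Finset.sum_eq_zero_iff_of_nonneg (fun _ _ => abs_nonneg _)).mp h0 j (mem_univ j)
    exact abs_eq_zero.mp this
  have heq : (EuclideanSpace.single i (1:ℝ)) = (0 : EuclideanSpace ℝ (Fin n)) := by
    apply b.ext_elem
    intro j
    have h2 : b.coord j (EuclideanSpace.single i (1:ℝ) + 0) = b.coord j 0 + L b j i := by
      rw [aff_add]; exact add_comm _ _
    rw [add_zero] at h2
    rw [h2, hz j, add_zero]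
  have h1 : (EuclideanSpace.single i (1:ℝ)) i = 1 := by simp
  rw [heq] at h1
  simp at h1

lemma mem_simplex_iff (x : EuclideanSpace ℝ (Fin n)) :
    x ∈ simplexSet ⇑b ↔ ∀ j, 0 ≤ b.coord j x := by
  rw [simplexSet, b.convexHull_eq_nonneg_coord]
  exact Iff.rfl

lemma max_neg_half (a : ℝ) : max 0 (-a) = (|a| - a)/2 := by
  rcases le_or_gt 0 a with h | h
  · rw [abs_of_nonneg h, max_eq_left (by linarith)]; ring
  · rw [abs_of_neg h, max_eq_right (by linarith)]; ring

lemma min_half (a : ℝ) : min 0 a = (a - |a|)/2 := by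
  rcases le_or_gt 0 a with h | h
  · rw [abs_of_nonneg h, min_eq_left h]; ring
  · rw [abs_of_neg h, min_eq_right h.le]; ring

lemma sum_max_neg (i : Fin n) :
    ∑ j, max 0 (-(L b j i)) = (∑ j, |L b j i|)/2 := by
  rw [Finset.sum_congr rfl (fun j _ => max_neg_half (L b j i)), ← Finset.sum_div,
    Finset.sum_sub_distrib, sum_L]
  ring

lemma sum_min (i : Fin n) :
    ∑ j, min 0 (L b j i) = -((∑ j, |L b j i|)/2) := by
  rw [Finset.sum_congr rfl (fun j _ => min_half (L b j i)), ← Finset.sum_div,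
    Finset.sum_sub_distrib, sum_L]
  ring

lemma axial_eq (i : Fin n) :
    axialDiameter i (simplexSet ⇑b) = 2 / ∑ j, |L b j i| := by
  have hApos := A_pos b i
  set A := ∑ j, |L b j i| with hA
  have hshift : ∀ (x : EuclideanSpace ℝ (Fin n)) (t : ℝ) j,
      b.coord j (x + t • EuclideanSpace.single i (1:ℝ)) = b.coord j x + t * L b j i := by
    intro x t j
    rw [add_comm x, aff_add, LinearMap.map_smul, smul_eq_mul]
    simp only [L]
    ring
  have hub : ∀ t ∈ {t : ℝ | 0 ≤ t ∧ ∃ x, x ∈ simplexSet ⇑b ∧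
      x + t • EuclideanSpace.single i (1:ℝ) ∈ simplexSet ⇑b}, t ≤ 2 / A := by
    rintro t ⟨ht, x, hx, hx'⟩
    rw [mem_simplex_iff] at hx hx'
    have key : ∀ j, t * max 0 (-(L b j i)) ≤ b.coord j x := by
      intro j
      rcases le_or_gt 0 (L b j i) with h | h
      · rw [max_eq_left (by linarith)]
        simpa using hx j
      · have h2 := hx' j
        rw [hshift] at h2
        rw [max_eq_right (by linarith : (0:ℝ) ≤ -(L b j i))]
        nlinarith [hx j]
    have h1 : ∑ j, t * max 0 (-(L b j i)) ≤ ∑ j, b.coord j x :=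
      Finset.sum_le_sum (fun j _ => key j)
    rw [b.sum_coord_apply_eq_one, ← Finset.mul_sum, sum_max_neg] at h1
    rw [le_div_iff₀ hApos]
    nlinarith
  have hmem : (2/A) ∈ {t : ℝ | 0 ≤ t ∧ ∃ x, x ∈ simplexSet ⇑b ∧
      x + t • EuclideanSpace.single i (1:ℝ) ∈ simplexSet ⇑b} := by
    refine ⟨by positivity, ?_⟩
    set w : Fin (n+1) → ℝ := fun j => (|L b j i| - L b j i)/A with hw
    have hwsum : ∑ j, w j = 1 := by
      simp only [hw]
      rw [← Finset.sum_div, Finset.sum_sub_distrib, sum_L, sub_zero, div_self hApos.ne']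
    set p := Finset.univ.affineCombination ℝ ⇑b w with hp
    have hcoordp : ∀ j, b.coord j p = w j := fun j =>
      b.coord_apply_combination_of_mem (mem_univ j) hwsum
    refine ⟨p, ?_, ?_⟩
    · rw [mem_simplex_iff]
      intro j
      rw [hcoordp j]
      have h2 := le_abs_self (L b j i)
      exact div_nonneg (by linarith) hApos.le
    · rw [mem_simplex_iff]
      intro j
      rw [hshift, hcoordp j]
      simp only [hw]
      have h2 := neg_abs_le (L b j i)
      have h3 : (|L b j i| - L b j i)/A + 2/A * L b j i = (|L b j i| + L b j i)/A := by
        field_simp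
        ring
      rw [h3]
      have h4 := neg_abs_le (L b j i)
      exact div_nonneg (by linarith) hApos.le
  rw [axialDiameter]
  exact le_antisymm (csSup_le ⟨2/A, hmem⟩ hub) (le_csSup ⟨2/A, hub⟩ hmem)

lemma coord_centroid (j : Fin (n+1)) :
    b.coord j (simplexCentroid ⇑b) = ((n:ℝ)+1)⁻¹ := by
  rw [simplexCentroid, Finset.centroid_def,
    b.coord_apply_combination_of_mem (mem_univ j)
      (Finset.univ.sum_centroidWeights_eq_one_of_nonempty ℝ Finset.univ_nonempty)]
  rw [Finset.centroidWeights_apply]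
  simp

lemma coord_homothet (a : ℝ) (x : EuclideanSpace ℝ (Fin n)) (j : Fin (n+1)) :
    b.coord j (simplexCentroid ⇑b + a • (x - simplexCentroid ⇑b))
      = ((n:ℝ)+1)⁻¹ + a * (b.coord j x - ((n:ℝ)+1)⁻¹) := by
  set c := simplexCentroid ⇑b with hc
  rw [add_comm c, aff_add, LinearMap.map_smul, smul_eq_mul]
  have hlin : (b.coord j).linear (x - c) = b.coord j x - b.coord j c := by
    have h := aff_add (b.coord j) (x - c) c
    rw [sub_add_cancel] at h
    linarith
  rw [hlin, coord_centroid]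
  ring

lemma mem_homothet_iff {σ : ℝ} (hσ : 0 < σ) (y : EuclideanSpace ℝ (Fin n)) :
    y ∈ simplexHomothet ⇑b σ ↔ ∀ j, (1 - σ)/((n:ℝ)+1) ≤ b.coord j y := by
  have hn1 : (0:ℝ) < (n:ℝ)+1 := by positivity
  constructor
  · rintro ⟨x, hx, rfl⟩ j
    rw [mem_simplex_iff] at hx
    rw [coord_homothet]
    have h1 := hx j
    have h2 : -(((n:ℝ)+1)⁻¹) ≤ b.coord j x - ((n:ℝ)+1)⁻¹ := by linarith
    have h3 := mul_le_mul_of_nonneg_left h2 hσ.le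
    have h4 : (1 - σ)/((n:ℝ)+1) = ((n:ℝ)+1)⁻¹ + σ * (-(((n:ℝ)+1)⁻¹)) := by
      field_simp
      ring
    rw [h4]
    linarith
  · intro h
    refine ⟨simplexCentroid ⇑b + σ⁻¹ • (y - simplexCentroid ⇑b), ?_, ?_⟩
    · rw [mem_simplex_iff]
      intro j
      rw [coord_homothet]
      have h1 := h j
      have h2 : -(σ/((n:ℝ)+1)) ≤ b.coord j y - ((n:ℝ)+1)⁻¹ := by
        have : (1 - σ)/((n:ℝ)+1) - ((n:ℝ)+1)⁻¹ = -(σ/((n:ℝ)+1)) := by field_simp; ring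
        linarith
      have h3 := mul_le_mul_of_nonneg_left h2 (inv_pos.mpr hσ).le
      have h4 : σ⁻¹ * (-(σ/((n:ℝ)+1))) = -(((n:ℝ)+1)⁻¹) := by
        field_simp
      rw [h4] at h3
      linarith
    · show simplexCentroid ⇑b + σ • (simplexCentroid ⇑b + σ⁻¹ • (y - simplexCentroid ⇑b)
          - simplexCentroid ⇑b) = y
      rw [add_sub_cancel_left, smul_smul, mul_inv_cancel₀ hσ.ne', one_smul,
        add_sub_cancel]

lemma mem_homothet_set {σ : ℝ} (hσ : 0 < σ) (y : EuclideanSpace ℝ (Fin n))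
    (h : ∀ j, (1 - σ)/((n:ℝ)+1) ≤ b.coord j y) : y ∈ simplexHomothet ⇑b σ :=
  (mem_homothet_iff b hσ y).mpr h

lemma alpha_eq (hn : 0 < n) :
    alphaInd (unitCube n) ⇑b = ∑ i, (∑ j, |L b j i|)/2 := by
  have hn1 : (0:ℝ) < (n:ℝ)+1 := by positivity
  have hNE : (Finset.univ : Finset (Fin n)).Nonempty := by
    exact ⟨⟨0, hn⟩, mem_univ _⟩
  set α := ∑ i, (∑ j, |L b j i|)/2 with hα
  have hαpos : 0 < α :=
    Finset.sum_pos (fun i _ => by have := A_pos b i; linarith) hNE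
  have hminsum : ∑ j, ∑ i, min 0 (L b j i) = -α := by
    rw [Finset.sum_comm, hα]
    rw [← Finset.sum_neg_distrib]
    exact Finset.sum_congr rfl fun i _ => sum_min b i
  have hexp : ∀ (z t : EuclideanSpace ℝ (Fin n)) j,
      b.coord j (z - t) = b.coord j (0 - t) + ∑ i, z i * L b j i := by
    intro z t j
    have e1 : z - t = z + (0 - t) := by abel
    rw [e1, coord_add_comb]
  have hlb : ∀ σ ∈ {σ : ℝ | 0 < σ ∧ ∃ t : EuclideanSpace ℝ (Fin n),
      unitCube n ⊆ (fun x => t + x) '' simplexHomothet ⇑b σ}, α ≤ σ := by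
    rintro σ ⟨hσ, t, hsub⟩
    have hQ : ∀ x ∈ unitCube n, ∀ j, (1 - σ)/((n:ℝ)+1) ≤ b.coord j (x - t) := by
      intro x hx j
      obtain ⟨m, hm, hmx⟩ := hsub hx
      have hmx' : t + m = x := hmx
      have : x - t ∈ simplexHomothet ⇑b σ := by
        have hm2 : m = x - t := by
          rw [← hmx']; exact (add_sub_cancel_left t m).symm
        rwa [← hm2]
      exact (mem_homothet_iff b hσ _).mp this j
    have key : ∀ j, (1 - σ)/((n:ℝ)+1) ≤ b.coord j (0 - t) + ∑ i, min 0 (L b j i) := by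
      intro j
      classical
      set xj : EuclideanSpace ℝ (Fin n) := WithLp.toLp 2 (fun i => (if L b j i < 0 then 1 else 0 : ℝ)) with hxj
      have hxjQ : xj ∈ unitCube n := by
        intro i
        simp only [hxj, PiLp.toLp_apply]
        split <;> norm_num
      have h1 := hQ xj hxjQ j
      rw [hexp] at h1
      have h2 : ∑ i, xj i * L b j i = ∑ i, min 0 (L b j i) := by
        refine Finset.sum_congr rfl fun i _ => ?_
        simp only [hxj, PiLp.toLp_apply]
        split
        · rename_i hh
          rw [one_mul, min_eq_right hh.le]
        · rename_i hh
          rw [zero_mul, min_eq_left (not_lt.mp hh)]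
      rw [h2] at h1
      exact h1
    have hsum := Finset.sum_le_sum (fun j (_ : j ∈ Finset.univ) => key j)
    rw [Finset.sum_add_distrib] at hsum
    have e1 : ∑ _j : Fin (n+1), (1 - σ)/((n:ℝ)+1) = 1 - σ := by
      rw [Finset.sum_const, Finset.card_univ, Fintype.card_fin, nsmul_eq_mul]
      push_cast
      field_simp
    have e2 : ∑ j : Fin (n+1), b.coord j (0 - t) = 1 := b.sum_coord_apply_eq_one _
    rw [e1, e2, hminsum] at hsum
    linarith
  have hmem : α ∈ {σ : ℝ | 0 < σ ∧ ∃ t : EuclideanSpace ℝ (Fin n),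
      unitCube n ⊆ (fun x => t + x) '' simplexHomothet ⇑b σ} := by
    refine ⟨hαpos, ?_⟩
    set w : Fin (n+1) → ℝ := fun j => (1 - α)/((n:ℝ)+1) - ∑ i, min 0 (L b j i) with hw
    have hwsum : ∑ j, w j = 1 := by
      simp only [hw]
      rw [Finset.sum_sub_distrib, hminsum]
      have e1 : ∑ _j : Fin (n+1), (1 - α)/((n:ℝ)+1) = 1 - α := by
        rw [Finset.sum_const, Finset.card_univ, Fintype.card_fin, nsmul_eq_mul]
        push_cast
        field_simp
      rw [e1]
      ring
    set p := Finset.univ.affineCombination ℝ ⇑b w with hp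
    have hcoordp : ∀ j, b.coord j p = w j := fun j =>
      b.coord_apply_combination_of_mem (mem_univ j) hwsum
    refine ⟨-p, fun x hx => ?_⟩
    refine ⟨x + p, ?_, ?_⟩
    swap
    · show -p + (x + p) = x
      rw [add_comm x p, neg_add_cancel_left]
    apply mem_homothet_set b hαpos
    intro j
    have e3 : x + p = x - (-p) := by abel
    rw [e3, hexp _ _ j]
    have e4 : b.coord j (0 - -p) = w j := by
      have : (0 : EuclideanSpace ℝ (Fin n)) - -p = p := by abel
      rw [this, hcoordp]
    rw [e4]
    have hbnd : ∀ i, min 0 (L b j i) ≤ x i * L b j i := by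
      intro i
      rcases le_or_gt 0 (L b j i) with h | h
      · rw [min_eq_left h]
        exact mul_nonneg (hx i).1 h
      · rw [min_eq_right h.le]
        have hx1 := (hx i).2
        nlinarith
    have hsums := Finset.sum_le_sum (fun i (_ : i ∈ Finset.univ) => hbnd i)
    simp only [hw]
    linarith
  exact le_antisymm (csInf_le ⟨α, hlb⟩ hmem) (le_csInf ⟨α, hmem⟩ hlb)

end AlphaAux
end
/-- For every nondegenerate simplex `S` in `ℝ^n`,
`α(S) = Σ_{i=1}^n 1/d_i(S)` where `α(S) = α(Q_n;S)` and `d_i` the axial diameters. -/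
theorem alpha_eq_sum_inv_axialDiameters (n : ℕ) (hn : 0 < n)
    (v : Fin (n + 1) → EuclideanSpace ℝ (Fin n)) (hv : AffineIndependent ℝ v) :
    alphaInd (unitCube n) v = ∑ i : Fin n, 1 / axialDiameter i (simplexSet v) := by
  have htop : affineSpan ℝ (Set.range v) = ⊤ := by
    rw [hv.affineSpan_eq_top_iff_card_eq_finrank_add_one]
    simp [finrank_euclideanSpace_fin]
  let b : AffineBasis (Fin (n + 1)) ℝ (EuclideanSpace ℝ (Fin n)) := ⟨v, hv, htop⟩
  have hb : ⇑b = v := rfl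
  rw [← hb, AlphaAux.alpha_eq b hn]
  refine Finset.sum_congr rfl fun i _ => ?_
  rw [AlphaAux.axial_eq b i, one_div_div]
end

section
/- Let S be a nondegenerate n-dimensional simplex in ℝ^n with basic Lagrange polynomial coefficients (l_{ij}). Then for every i = 1,…,n, 1/d_i(S) = (1/2)·Σ_{j=1}^{n+1} |l_{ij}|, where d_i(S) is the i-th axial diameter of S. -/
open Set MeasureTheory Finset Metric

/-- For a nondegenerate simplex with Lagrange coefficients `l i j`
(so that `λ_j(x) = Σ_i l i j * x_i + b j`), for each `i`:
`1/d_i(S) = (1/2)·Σ_{j=1}^{n+1} |l_{ij}|`. -/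
theorem inv_axialDiameter_eq_half_sum_abs_coeff (n : ℕ) (hn : 0 < n)
    (v : Fin (n + 1) → EuclideanSpace ℝ (Fin n)) (hv : AffineIndependent ℝ v)
    (l : Fin n → Fin (n + 1) → ℝ) (b : Fin (n + 1) → ℝ)
    (lam : Fin (n + 1) → (EuclideanSpace ℝ (Fin n) →ᵃ[ℝ] ℝ))
    (hlam : IsLagrangeBasis v lam)
    (hcoef : ∀ j x, lam j x = (∑ i : Fin n, l i j * x i) + b j) :
    ∀ i : Fin n, 1 / axialDiameter i (simplexSet v) =
      (1 / 2) * ∑ j : Fin (n + 1), |l i j| := by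
  intro i
  classical
  have htop : affineSpan ℝ (Set.range v) = ⊤ := by
    rw [hv.affineSpan_eq_top_iff_card_eq_finrank_add_one]
    simp [finrank_euclideanSpace_fin]
  let B : AffineBasis (Fin (n + 1)) ℝ (EuclideanSpace ℝ (Fin n)) := ⟨v, hv, htop⟩
  have hBv : ∀ k, B k = v k := fun k => rfl
  -- lam agrees with barycentric coordinates
  have hcoord : ∀ j x, lam j x = B.coord j x := by
    intro j x
    have hw : ∑ k, B.coord k x = 1 := B.sum_coord_apply_eq_one x
    have hx : (Finset.univ.affineCombination ℝ v fun k => B.coord k x) = x :=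
      B.affineCombination_coord_eq_self x
    have := Finset.univ.map_affineCombination v (fun k => B.coord k x) (by simpa using hw) (lam j)
    rw [hx] at this
    rw [this, Finset.univ.affineCombination_eq_linear_combination _ _ (by simpa using hw)]
    simp [Function.comp, hlam j]
  have hmem : ∀ x, x ∈ simplexSet v ↔ ∀ j, 0 ≤ lam j x := by
    intro x
    have : Set.range v = Set.range B := rfl
    rw [simplexSet, this, B.convexHull_eq_nonneg_coord]
    simp only [Set.mem_setOf_eq]
    constructor <;> intro h j <;> [rw [hcoord]; rw [← hcoord]] <;> exact h j
  have hsum1 : ∀ x, ∑ j, lam j x = 1 := by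
    intro x
    simp only [hcoord]
    exact B.sum_coord_apply_eq_one x
  -- behaviour along the i-th axis
  have hstep : ∀ (j) (x : EuclideanSpace ℝ (Fin n)) (t : ℝ),
      lam j (x + t • EuclideanSpace.single i (1 : ℝ)) = lam j x + t * l i j := by
    intro j x t
    rw [hcoef j, hcoef j]
    have happ : ∀ i' : Fin n, (x + t • EuclideanSpace.single i (1 : ℝ)) i'
        = x i' + t * (if i' = i then (1 : ℝ) else 0) := by
      intro i'
      simp [EuclideanSpace.single_apply]
    simp only [happ, mul_add]
    rw [Finset.sum_add_distrib]
    have : ∑ i' : Fin n, l i' j * (t * if i' = i then (1 : ℝ) else 0) = t * l i j := by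
      simp [mul_ite, Finset.sum_ite_eq', mul_comm]
    rw [this]; ring
  have hzero : ∑ j, l i j = 0 := by
    have h1 := hsum1 ((0 : EuclideanSpace ℝ (Fin n)) + (1 : ℝ) • EuclideanSpace.single i (1 : ℝ))
    have h2 := hsum1 (0 : EuclideanSpace ℝ (Fin n))
    simp only [hstep, Finset.sum_add_distrib, h2] at h1
    simp only [one_mul] at h1
    linarith
  set D : ℝ := ∑ j, |l i j| with hD
  have hDpos : 0 < D := by
    rcases (Finset.sum_nonneg fun j _ => abs_nonneg (l i j)).lt_or_eq with h | h
    · exact h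
    · exfalso
      have hall : ∀ j, l i j = 0 := by
        intro j
        have := (Finset.sum_eq_zero_iff_of_nonneg
          (fun j _ => abs_nonneg (l i j))).mp h.symm j (Finset.mem_univ j)
        exact abs_eq_zero.mp this
      have : v 0 + (1 : ℝ) • EuclideanSpace.single i (1 : ℝ) = v 0 := by
        apply B.ext_elem
        intro j
        rw [← hcoord, ← hcoord, hstep, hall, mul_zero, add_zero]
      have h0 : ((1 : ℝ) • EuclideanSpace.single i (1 : ℝ) : EuclideanSpace ℝ (Fin n)) = 0 := by
        have := congrArg (fun y => y - v 0) this
        simpa [add_sub_cancel_left] using this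
      have := congrArg (fun y => y i) h0
      simp [EuclideanSpace.single_apply] at this
  set T : Set ℝ := {t : ℝ | 0 ≤ t ∧ ∃ x, x ∈ simplexSet v ∧
      x + t • (EuclideanSpace.single i (1 : ℝ)) ∈ simplexSet v} with hT
  have hub : ∀ t ∈ T, t ≤ 2 / D := by
    rintro t ⟨ht0, x, hx, hxt⟩
    rw [hmem] at hx hxt
    have key : t * D ≤ 2 := by
      have hle : ∀ j : Fin (n + 1), t * |l i j| ≤ 2 * lam j x + t * l i j := by
        intro j
        rcases abs_cases (l i j) with ⟨he, _⟩ | ⟨he, _⟩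
        · rw [he]; have := hx j; linarith
        · rw [he]
          have h1 := hx j
          have h2 := hxt j
          rw [hstep] at h2
          linarith
      calc t * D = ∑ j, t * |l i j| := by rw [hD, Finset.mul_sum]
        _ ≤ ∑ j, (2 * lam j x + t * l i j) := Finset.sum_le_sum fun j _ => hle j
        _ = 2 * (∑ j, lam j x) + t * (∑ j, l i j) := by
            rw [Finset.sum_add_distrib, Finset.mul_sum, Finset.mul_sum]
        _ = 2 := by rw [hsum1, hzero]; ring
    rw [le_div_iff₀ hDpos]; linarith
  have hmemT : (2 / D) ∈ T := by
    set t₀ : ℝ := 2 / D with ht₀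
    have ht₀pos : 0 < t₀ := div_pos two_pos hDpos
    set w : Fin (n + 1) → ℝ := fun j => t₀ * (|l i j| - l i j) / 2 with hw
    have hwsum : ∑ j, w j = 1 := by
      have : ∑ j, w j = t₀ * (D - ∑ j, l i j) / 2 := by
        rw [hD, ← Finset.sum_sub_distrib, Finset.mul_sum, Finset.sum_div]
      rw [this, hzero, sub_zero, ht₀]
      field_simp
    set x : EuclideanSpace ℝ (Fin n) := Finset.univ.affineCombination ℝ v w with hx
    have hcx : ∀ j, lam j x = w j := by
      intro j
      rw [hcoord]
      exact B.coord_apply_combination_of_mem (Finset.mem_univ j) hwsum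
    refine ⟨le_of_lt ht₀pos, x, ?_, ?_⟩
    · rw [hmem]
      intro j
      rw [hcx]
      have : 0 ≤ |l i j| - l i j := by
        rcases abs_cases (l i j) with ⟨he, _⟩ | ⟨he, hn⟩ <;> rw [he] <;> linarith
      positivity
    · rw [hmem]
      intro j
      rw [hstep, hcx, hw]
      have : t₀ * (|l i j| - l i j) / 2 + t₀ * l i j = t₀ * (|l i j| + l i j) / 2 := by ring
      rw [this]
      have : 0 ≤ |l i j| + l i j := by
        rcases abs_cases (l i j) with ⟨he, hn⟩ | ⟨he, _⟩ <;> rw [he] <;> linarith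
      positivity
  have hsup : axialDiameter i (simplexSet v) = 2 / D := by
    rw [axialDiameter]
    exact le_antisymm (csSup_le ⟨2 / D, hmemT⟩ hub) (le_csSup ⟨2 / D, hub⟩ hmemT)
  rw [hsup, one_div_div]
  ring
end

section
/- Let Ω be a convex body in ℝ^n, let S be a nondegenerate n-dimensional simplex with all vertices in Ω, and let P : C(Ω) → C(Ω) be the interpolation projector with nodes at the vertices of S. Then ((n+1)/(2n))·(‖P‖_Ω − 1) + 1 ≤ ξ(Ω;S) ≤ ((n+1)/2)·(‖P‖_Ω − 1) + 1. -/
open Set MeasureTheory Finset Metric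

set_option maxHeartbeats 1000000 in
/-- For a convex body `Ω`, a nondegenerate simplex with vertices in `Ω`
and the corresponding interpolation projector `P`:
`((n+1)/(2n))(‖P‖_Ω − 1) + 1 ≤ ξ(Ω;S) ≤ ((n+1)/2)(‖P‖_Ω − 1) + 1`. -/
theorem xi_bounds_via_projNorm (n : ℕ) (hn : 0 < n)
    (Ω : Set (EuclideanSpace ℝ (Fin n)))
    (hΩcomp : IsCompact Ω) (hΩconv : Convex ℝ Ω) (hΩint : (interior Ω).Nonempty)
    (v : Fin (n + 1) → EuclideanSpace ℝ (Fin n)) (hv : AffineIndependent ℝ v)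
    (hmem : ∀ j, v j ∈ Ω)
    (lam : Fin (n + 1) → (EuclideanSpace ℝ (Fin n) →ᵃ[ℝ] ℝ))
    (hlam : IsLagrangeBasis v lam) :
    ((n : ℝ) + 1) / (2 * n) * (projNorm Ω lam - 1) + 1 ≤ xiInd Ω v ∧
    xiInd Ω v ≤ ((n : ℝ) + 1) / 2 * (projNorm Ω lam - 1) + 1 := by
  classical
  have hn1 : (0:ℝ) < (n:ℝ) + 1 := by positivity
  have hnR : (0:ℝ) < (n:ℝ) := by exact_mod_cast hn
  have hcard : Fintype.card (Fin (n+1)) = Module.finrank ℝ (EuclideanSpace ℝ (Fin n)) + 1 := by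
    simp [finrank_euclideanSpace_fin]
  have htop : affineSpan ℝ (Set.range v) = ⊤ :=
    hv.affineSpan_eq_top_iff_card_eq_finrank_add_one.mpr hcard
  set b : AffineBasis (Fin (n+1)) ℝ (EuclideanSpace ℝ (Fin n)) := ⟨v, hv, htop⟩ with hbdef
  have hb : ∀ i, b i = v i := fun i => rfl
  have hco : ∀ j x, lam j x = b.coord j x := by
    intro j x
    have h1 : ∑ i, b.coord i x = 1 := b.sum_coord_apply_eq_one x
    conv_lhs => rw [← b.affineCombination_coord_eq_self x]
    rw [Finset.map_affineCombination _ _ _ h1 (lam j),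
      Finset.univ.affineCombination_eq_linear_combination _ _ h1]
    simp [Function.comp, hb, hlam j, mul_ite]
  have hsum1 : ∀ x, ∑ j, lam j x = 1 := by
    intro x; simp_rw [hco]; exact b.sum_coord_apply_eq_one x
  set c := simplexCentroid v with hcdef
  have hlamc : ∀ j, lam j c = ((n:ℝ)+1)⁻¹ := by
    intro j
    have hw : ∑ i : Fin (n+1), Finset.univ.centroidWeights ℝ i = 1 :=
      Finset.univ.sum_centroidWeights_eq_one_of_nonempty ℝ Finset.univ_nonempty
    rw [hcdef, simplexCentroid, Finset.centroid_def,
      Finset.map_affineCombination _ _ _ hw (lam j),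
      Finset.univ.affineCombination_eq_linear_combination _ _ hw]
    simp [Function.comp, hlam j, Finset.centroidWeights_apply, mul_ite]
  have hlw : ∀ (σ : ℝ) (j k), lam j (AffineMap.homothety c σ (v k))
      = (1-σ)/((n:ℝ)+1) + σ * (if j = k then (1:ℝ) else 0) := by
    intro σ j k
    rw [AffineMap.homothety_eq_lineMap, AffineMap.apply_lineMap, AffineMap.lineMap_apply,
      hlamc, hlam j]
    simp only [vsub_eq_sub, vadd_eq_add, smul_eq_mul]
    by_cases h : j = k <;> simp only [h, if_pos, if_true, if_neg, ite_true, ite_false] <;>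
      field_simp <;> ring
  have hhom : ∀ σ : ℝ, simplexHomothet v σ
      = convexHull ℝ (Set.range fun j => AffineMap.homothety c σ (v j)) := by
    intro σ
    have hfun : (fun x => c + σ • (x - c)) = ⇑(AffineMap.homothety c σ) := by
      funext x
      rw [AffineMap.homothety_apply]
      simp only [vsub_eq_sub, vadd_eq_add]
      abel
    rw [simplexHomothet, homothet, ← hcdef, hfun, simplexSet,
      AffineMap.image_convexHull, ← Set.range_comp]
    rfl
  have hcomb : ∀ (σ : ℝ) (μ : Fin (n+1) → ℝ), (∑ k, μ k = 1) → ∀ j,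
      (∑ k, μ k • (⇑(lam j) ∘ fun i => AffineMap.homothety c σ (v i)) k)
        = (1-σ)/((n:ℝ)+1) + σ * μ j := by
    intro σ μ hμ1 j
    have hterm : ∀ k, μ k • (⇑(lam j) ∘ fun i => AffineMap.homothety c σ (v i)) k
        = μ k * ((1-σ)/((n:ℝ)+1)) + σ * (if j = k then μ k else 0) := by
      intro k
      simp only [Function.comp_apply, hlw σ j k, smul_eq_mul]
      by_cases h : j = k <;> simp [h] <;> ring
    rw [Finset.sum_congr rfl fun k _ => hterm k, Finset.sum_add_distrib, ← Finset.sum_mul,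
      hμ1, one_mul, ← Finset.mul_sum, Finset.sum_ite_eq Finset.univ j μ,
      if_pos (Finset.mem_univ j)]
  have hmemchar : ∀ σ : ℝ, 0 < σ → ∀ x,
      (x ∈ simplexHomothet v σ ↔ ∀ j, (1-σ)/((n:ℝ)+1) ≤ lam j x) := by
    intro σ hσ x
    rw [hhom σ, convexHull_range_eq_exists_affineCombination]
    constructor
    · rintro ⟨s, μ, hμ0, hμ1, rfl⟩ j
      rw [Finset.affineCombination_indicator_subset μ _ (Finset.subset_univ s)]
      have hμ'1 : ∑ k, Set.indicator (↑s) μ k = 1 := by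
        rw [Finset.sum_indicator_subset μ (Finset.subset_univ s)]; exact hμ1
      have hμ'0 : 0 ≤ Set.indicator (↑s) μ j := by
        by_cases hk : j ∈ (↑s : Set (Fin (n+1)))
        · rw [Set.indicator_of_mem hk]; exact hμ0 j hk
        · rw [Set.indicator_of_notMem hk]
      rw [Finset.map_affineCombination _ _ _ hμ'1 (lam j),
        Finset.univ.affineCombination_eq_linear_combination _ _ hμ'1,
        hcomb σ _ hμ'1 j]
      have := mul_nonneg hσ.le hμ'0
      linarith
    · intro h
      refine ⟨Finset.univ, fun j => (lam j x - (1-σ)/((n:ℝ)+1))/σ,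
        fun i _ => div_nonneg (sub_nonneg.2 (h i)) hσ.le, ?_, ?_⟩
      · rw [← Finset.sum_div, Finset.sum_sub_distrib, hsum1, Finset.sum_const,
          Finset.card_univ, Fintype.card_fin, nsmul_eq_mul]
        field_simp
        push_cast; ring
      · have hμ1 : (∑ j, (lam j x - (1-σ)/((n:ℝ)+1))/σ) = 1 := by
          rw [← Finset.sum_div, Finset.sum_sub_distrib, hsum1, Finset.sum_const,
            Finset.card_univ, Fintype.card_fin, nsmul_eq_mul]
          field_simp
          push_cast; ring
        apply b.ext_elem
        intro j
        rw [← hco j, ← hco j]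
        rw [Finset.map_affineCombination _ _ _ hμ1 (lam j),
          Finset.univ.affineCombination_eq_linear_combination _ _ hμ1,
          hcomb σ _ hμ1 j]
        field_simp
        ring
  have hΩne : Ω.Nonempty := ⟨v 0, hmem 0⟩
  have hxs : ∀ j : Fin (n+1), ∃ y ∈ Ω, ∀ x ∈ Ω, -(lam j x) ≤ -(lam j y) := by
    intro j
    obtain ⟨y, hy, hmax⟩ := hΩcomp.exists_isMaxOn hΩne
      (((lam j).continuous_of_finiteDimensional).neg.continuousOn)
    exact ⟨y, hy, fun x hx => hmax hx⟩
  choose xs hxsΩ hxsmax using hxs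
  set M : ℝ := Finset.univ.sup' Finset.univ_nonempty (fun j => -(lam j (xs j))) with hMdef
  have hMub : ∀ x ∈ Ω, ∀ j, -(lam j x) ≤ M := by
    intro x hx j
    rw [hMdef]
    exact le_trans (hxsmax j x hx)
      (Finset.le_sup' (fun j => -(lam j (xs j))) (Finset.mem_univ j))
  have h01 : (0 : Fin (n+1)) ≠ 1 := by
    have hv1 : ((1 : Fin (n+1)) : ℕ) = 1 % (n+1) := Fin.val_one' (n+1)
    have hv2 : 1 % (n+1) = 1 := Nat.mod_eq_of_lt (by omega)
    intro h
    have h0 := congrArg Fin.val h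
    rw [Fin.val_zero, hv1, hv2] at h0
    exact one_ne_zero h0.symm
  have hM0 : 0 ≤ M := by
    have h := hMub (v 1) (hmem 1) 0
    rw [hlam 0 1, if_neg h01] at h
    simpa using h
  obtain ⟨jM, _, hjM⟩ := Finset.exists_mem_eq_sup' Finset.univ_nonempty
    (fun j => -(lam j (xs j)))
  have hxMΩ : xs jM ∈ Ω := hxsΩ jM
  have hMeq : M = -(lam jM (xs jM)) := hjM
  have hxiset : {σ : ℝ | 1 ≤ σ ∧ Ω ⊆ simplexHomothet v σ} = Set.Ici (1 + ((n:ℝ)+1) * M) := by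
    ext σ
    simp only [Set.mem_setOf_eq, Set.mem_Ici]
    constructor
    · rintro ⟨h1, hsub⟩
      have hdiv := (hmemchar σ (lt_of_lt_of_le one_pos h1) (xs jM)).1 (hsub hxMΩ) jM
      rw [div_le_iff₀ hn1] at hdiv
      have hlamM : lam jM (xs jM) = -M := by linarith [hMeq]
      rw [hlamM] at hdiv
      nlinarith
    · intro hσ
      have h1 : (1:ℝ) ≤ σ := by nlinarith
      refine ⟨h1, fun x hx => ?_⟩
      rw [hmemchar σ (by linarith) x]
      intro j
      have hGx : -(lam j x) ≤ M := hMub x hx j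
      rw [div_le_iff₀ hn1]
      nlinarith [mul_le_mul_of_nonneg_right hGx hn1.le]
  have hxi : xiInd Ω v = 1 + ((n:ℝ)+1) * M := by
    unfold xiInd
    rw [hxiset, csInf_Ici]
  have hFcont : Continuous (fun x => ∑ j, |lam j x|) :=
    continuous_finset_sum _ fun j _ => ((lam j).continuous_of_finiteDimensional).abs
  obtain ⟨xF, hxFΩ, hxFmax⟩ := hΩcomp.exists_isMaxOn hΩne hFcont.continuousOn
  have hN : projNorm Ω lam = ∑ j, |lam j xF| := by
    unfold projNorm
    exact IsGreatest.csSup_eq ⟨⟨xF, hxFΩ, rfl⟩, by rintro t ⟨x, hx, rfl⟩; exact hxFmax hx⟩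
  have habs : ∀ t : ℝ, |t| = t + 2 * max (-t) 0 := by
    intro t
    rcases le_total 0 t with h | h
    · rw [abs_of_nonneg h, max_eq_right (neg_nonpos.2 h)]; ring
    · rw [abs_of_nonpos h, max_eq_left (neg_nonneg.2 h)]; ring
  have hFH : ∀ x, (∑ j, |lam j x|) = 1 + 2 * ∑ j, max (-(lam j x)) 0 := by
    intro x
    rw [Finset.sum_congr rfl fun j _ => habs (lam j x), Finset.sum_add_distrib, hsum1,
      ← Finset.mul_sum]
  have hHle : ∀ x ∈ Ω, (∑ j, max (-(lam j x)) 0) ≤ (n:ℝ) * M := by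
    intro x hx
    have hex : ∃ j0, 0 < lam j0 x := by
      by_contra hcon
      push_neg at hcon
      have hle : (∑ j, lam j x) ≤ 0 := Finset.sum_nonpos fun j _ => hcon j
      rw [hsum1 x] at hle; linarith
    obtain ⟨j0, hj0⟩ := hex
    have hz : max (-(lam j0 x)) 0 = 0 := max_eq_right (by linarith)
    rw [← Finset.add_sum_erase _ _ (Finset.mem_univ j0), hz, zero_add]
    have hcarde : (Finset.univ.erase j0).card = n := by
      rw [Finset.card_erase_of_mem (Finset.mem_univ j0), Finset.card_univ, Fintype.card_fin]
      omega
    calc (∑ j ∈ Finset.univ.erase j0, max (-(lam j x)) 0)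
        ≤ (Finset.univ.erase j0).card • M :=
          Finset.sum_le_card_nsmul _ _ M (fun j _ => max_le (hMub x hx j) hM0)
      _ = (n:ℝ) * M := by rw [hcarde]; simp [nsmul_eq_mul]
  have hHgeM : M ≤ ∑ j, max (-(lam j (xs jM))) 0 := by
    have h1 : max (-(lam jM (xs jM))) 0 ≤ ∑ j, max (-(lam j (xs jM))) 0 :=
      Finset.single_le_sum (f := fun j => max (-(lam j (xs jM))) 0)
        (fun j _ => le_max_right _ _) (Finset.mem_univ jM)
    calc M = -(lam jM (xs jM)) := hMeq
      _ ≤ max (-(lam jM (xs jM))) 0 := le_max_left _ _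
      _ ≤ _ := h1
  have hNub : projNorm Ω lam ≤ 1 + 2*((n:ℝ)*M) := by
    rw [hN, hFH xF]
    have := hHle xF hxFΩ
    linarith
  have hNlb : 1 + 2*M ≤ projNorm Ω lam := by
    rw [hN]
    have h1 : (∑ j, |lam j (xs jM)|) ≤ ∑ j, |lam j xF| := hxFmax hxMΩ
    have h2 := hFH (xs jM)
    linarith
  rw [hxi]
  constructor
  · have h2n : (0:ℝ) < 2*n := by positivity
    have key : ((n:ℝ)+1)/(2*n) * (projNorm Ω lam - 1) ≤ ((n:ℝ)+1)*M := by
      rw [div_mul_eq_mul_div, div_le_iff₀ h2n]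
      nlinarith
    linarith
  · have h2M : 2*M ≤ projNorm Ω lam - 1 := by linarith
    nlinarith [mul_le_mul_of_nonneg_left h2M (by positivity : (0:ℝ) ≤ ((n:ℝ)+1)/2)]
end

section
/- For every n ∈ ℕ and every γ ≥ 1, the n-dimensional Lebesgue measure of the set E_{n,γ} := { x ∈ ℝ^n : Σ_{j=1}^{n} |x_j| + |1 − Σ_{j=1}^{n} x_j| ≤ γ } equals χ_n(γ)/n!. -/
open Set MeasureTheory Finset Metric

section Helpers
open Polynomial
lemma iteratedDeriv_polyeval (p : Polynomial ℝ) (n : ℕ) :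
    iteratedDeriv n (fun s => p.eval s) = fun s => (Polynomial.derivative^[n] p).eval s := by
  induction n with
  | zero => simp
  | succ n ih =>
    rw [iteratedDeriv_succ, ih]
    funext s
    rw [Function.iterate_succ_apply']
    exact Polynomial.deriv _

lemma legendre_sum (n : ℕ) (γ : ℝ) :
    iteratedDeriv n (fun s : ℝ => (s ^ 2 - 1) ^ n) γ =
      (n.factorial : ℝ) * ∑ k ∈ Finset.range (n+1),
        (n.choose k : ℝ)^2 * (γ - 1)^k * (γ + 1)^(n-k) := by
  have h0 : (fun s : ℝ => (s ^ 2 - 1) ^ n)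
      = fun s => Polynomial.eval s (((X - C 1) ^ n * (X + C 1) ^ n : Polynomial ℝ)) := by
    funext s; simp [← mul_pow]; ring
  rw [h0, iteratedDeriv_polyeval]
  have h1 : (X + C (1:ℝ)) = X - C (-1) := by simp
  rw [h1, Polynomial.iterate_derivative_mul]
  simp only [Polynomial.iterate_derivative_X_sub_pow, eval_finset_sum]
  rw [Finset.mul_sum]
  refine Finset.sum_congr rfl fun k hk => ?_
  have hkn : k ≤ n := Nat.lt_succ_iff.mp (Finset.mem_range.mp hk)
  simp only [smul_mul_assoc, mul_smul_comm, eval_smul, eval_mul, eval_pow, eval_sub, eval_X,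
    eval_C, smul_eq_mul, nsmul_eq_mul, eval_natCast]
  have e1 : (n.descFactorial (n-k) : ℝ) = (n-k).factorial * n.choose (n-k) := by
    exact_mod_cast congrArg (Nat.cast : ℕ → ℝ) (Nat.descFactorial_eq_factorial_mul_choose n (n-k))
  have e2 : (n.descFactorial k : ℝ) = k.factorial * n.choose k := by
    exact_mod_cast congrArg (Nat.cast : ℕ → ℝ) (Nat.descFactorial_eq_factorial_mul_choose n k)
  rw [e1, e2, Nat.choose_symm hkn, Nat.sub_sub_self hkn]
  have e4 : (n.choose k : ℝ) * k.factorial * (n-k).factorial = n.factorial := by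
    exact_mod_cast congrArg (Nat.cast : ℕ → ℝ) (Nat.choose_mul_factorial_mul_factorial hkn)
  linear_combination ((n.choose k:ℝ)^2 * (γ-1)^k * (γ+1)^(n-k)) * e4

lemma volume_corner_simplex : ∀ (k : ℕ) (a : ℝ), 0 ≤ a →
    volume {x : Fin k → ℝ | (∀ i, 0 ≤ x i) ∧ ∑ i, x i ≤ a}
      = ENNReal.ofReal (a ^ k / k.factorial) := by
  intro k
  induction k with
  | zero =>
    intro a ha
    have : {x : Fin 0 → ℝ | (∀ i, 0 ≤ x i) ∧ ∑ i, x i ≤ a} = Set.univ := by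
      ext x; simp [ha]
    rw [this]
    rw [volume_pi, Measure.pi_univ]
    simp
  | succ k ih =>
    intro a ha
    set T : Set (ℝ × (Fin k → ℝ)) :=
      {p | 0 ≤ p.1 ∧ (∀ i, 0 ≤ p.2 i) ∧ p.1 + ∑ i, p.2 i ≤ a} with hTdef
    have hmp := MeasureTheory.volume_preserving_piFinSuccAbove (fun _ : Fin (k+1) => ℝ) 0
    have hpre : (MeasurableEquiv.piFinSuccAbove (fun _ : Fin (k+1) => ℝ) 0) ⁻¹' T
        = {x : Fin (k+1) → ℝ | (∀ i, 0 ≤ x i) ∧ ∑ i, x i ≤ a} := by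
      ext x
      simp only [Set.mem_preimage, Set.mem_setOf_eq, hTdef,
        MeasurableEquiv.piFinSuccAbove, Fin.tail,
        MeasurableEquiv.coe_mk, Equiv.coe_fn_mk]
      rw [Fin.sum_univ_succ, Fin.forall_fin_succ]
      constructor
      · rintro ⟨h1, h2, h3⟩
        exact ⟨⟨h1, fun i => by simpa [Fin.tail] using h2 i⟩, by simpa [Fin.tail] using h3⟩
      · rintro ⟨⟨h1, h2⟩, h3⟩
        exact ⟨h1, fun i => by simpa [Fin.tail] using h2 i, by simpa [Fin.tail] using h3⟩
    have hTmeas : MeasurableSet T := by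
      rw [hTdef, Set.setOf_and, Set.setOf_and, Set.setOf_forall]
      refine MeasurableSet.inter ?_ (MeasurableSet.inter ?_ ?_)
      · exact measurableSet_le measurable_const measurable_fst
      · exact MeasurableSet.iInter fun i =>
          measurableSet_le measurable_const (measurable_snd.eval (a := i))
      · exact measurableSet_le (measurable_fst.add
          (Finset.measurable_sum univ fun i _ => measurable_snd.eval (a := i)))
          measurable_const
    have hvol : volume {x : Fin (k+1) → ℝ | (∀ i, 0 ≤ x i) ∧ ∑ i, x i ≤ a}
        = (volume : Measure (ℝ × (Fin k → ℝ))) T := by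
      rw [← hpre]
      exact hmp.measure_preimage hTmeas.nullMeasurableSet
    rw [hvol]
    rw [MeasureTheory.Measure.volume_eq_prod, Measure.prod_apply hTmeas]
    have hslice : ∀ t : ℝ, volume (Prod.mk t ⁻¹' T)
        = Set.indicator (Set.Icc 0 a) (fun t => ENNReal.ofReal ((a - t)^k / k.factorial)) t := by
      intro t
      by_cases h1 : 0 ≤ t
      · by_cases h2 : t ≤ a
        · rw [Set.indicator_of_mem (Set.mem_Icc.mpr ⟨h1, h2⟩)]
          rw [← ih (a - t) (by linarith)]
          congr 1
          ext y
          simp only [Set.mem_preimage, Set.mem_setOf_eq, hTdef]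
          constructor
          · rintro ⟨_, hy, hs⟩; exact ⟨hy, by linarith⟩
          · rintro ⟨hy, hs⟩; exact ⟨h1, hy, by linarith⟩
        · rw [Set.indicator_of_notMem (by simp [h2])]
          have hemp : Prod.mk t ⁻¹' T = (∅ : Set (Fin k → ℝ)) := by
            ext y
            simp only [Set.mem_preimage, Set.mem_setOf_eq, hTdef, Set.mem_empty_iff_false,
              iff_false, not_and]
            intro _ hy
            have : 0 ≤ ∑ i, y i := Finset.sum_nonneg fun i _ => hy i
            intro hc; linarith
          rw [hemp, measure_empty]
      · rw [Set.indicator_of_notMem (by simp [h1])]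
        have hemp : Prod.mk t ⁻¹' T = (∅ : Set (Fin k → ℝ)) := by
          ext y
          simp only [Set.mem_preimage, Set.mem_setOf_eq, hTdef, Set.mem_empty_iff_false,
            iff_false, not_and]
          intro hc; exact absurd hc h1
        rw [hemp, measure_empty]
    calc ∫⁻ t, volume (Prod.mk t ⁻¹' T)
        = ∫⁻ t, Set.indicator (Set.Icc 0 a)
            (fun t => ENNReal.ofReal ((a - t)^k / k.factorial)) t := by
          exact lintegral_congr hslice
      _ = ∫⁻ t in Set.Icc 0 a, ENNReal.ofReal ((a - t)^k / k.factorial) := by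
          rw [lintegral_indicator measurableSet_Icc]
      _ = ENNReal.ofReal (∫ t in Set.Icc 0 a, (a - t)^k / k.factorial) := by
          rw [← ofReal_integral_eq_lintegral_ofReal]
          · exact (Continuous.integrableOn_Icc (by continuity))
          · refine (ae_restrict_iff' measurableSet_Icc).mpr
              (Filter.Eventually.of_forall fun t ht => ?_)
            have : 0 ≤ a - t := by linarith [ht.2]
            positivity
      _ = ENNReal.ofReal (a ^ (k+1) / (k+1).factorial) := by
          congr 1
          rw [MeasureTheory.integral_Icc_eq_integral_Ioc,
            ← intervalIntegral.integral_of_le ha]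
          have : ∫ t in (0:ℝ)..a, (a - t)^k / k.factorial
              = (∫ t in (0:ℝ)..a, (a - t)^k) / k.factorial := by
            rw [intervalIntegral.integral_div]
          rw [this, intervalIntegral.integral_comp_sub_left (fun s => s ^ k) a]
          simp only [sub_zero, sub_self, integral_pow]
          rw [Nat.factorial_succ]
          push_cast
          field_simp
          simp

lemma volume_corner_simplex' (ι : Type*) [Fintype ι] [DecidableEq ι] (a : ℝ) (ha : 0 ≤ a) :
    volume {x : ι → ℝ | (∀ i, 0 ≤ x i) ∧ ∑ i, x i ≤ a}
      = ENNReal.ofReal (a ^ (Fintype.card ι) / (Fintype.card ι).factorial) := by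
  obtain ⟨e⟩ := Fintype.truncEquivFin ι
  have hmp := MeasureTheory.volume_measurePreserving_piCongrLeft (fun _ : ι => ℝ) e.symm
  have hpre : (MeasurableEquiv.piCongrLeft (fun _ : ι => ℝ) e.symm) ⁻¹'
      {x : ι → ℝ | (∀ i, 0 ≤ x i) ∧ ∑ i, x i ≤ a}
      = {x : Fin (Fintype.card ι) → ℝ | (∀ i, 0 ≤ x i) ∧ ∑ i, x i ≤ a} := by
    ext x
    set y := (MeasurableEquiv.piCongrLeft (fun _ : ι => ℝ) e.symm) x with hy
    have happ : ∀ j : Fin (Fintype.card ι), y (e.symm j) = x j := fun j =>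
      Equiv.piCongrLeft_apply_apply (fun _ : ι => ℝ) e.symm x j
    have hsum : ∑ i, y i = ∑ j, x j := by
      rw [← Equiv.sum_comp e.symm y]
      exact Finset.sum_congr rfl fun j _ => happ j
    have hfa : (∀ i, 0 ≤ y i) ↔ (∀ j, 0 ≤ x j) := by
      constructor
      · intro h j; rw [← happ j]; exact h _
      · intro h i
        have := h (e i)
        rw [← happ (e i), Equiv.symm_apply_apply] at this
        exact this
    simp only [Set.mem_preimage, Set.mem_setOf_eq, ← hy, hsum, hfa]
  rw [← volume_corner_simplex (Fintype.card ι) a ha, ← hpre]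
  have hmeas : MeasurableSet {x : ι → ℝ | (∀ i, 0 ≤ x i) ∧ ∑ i, x i ≤ a} := by
    rw [Set.setOf_and, Set.setOf_forall]
    exact (MeasurableSet.iInter fun i =>
      measurableSet_le measurable_const (measurable_pi_apply i)).inter
      (measurableSet_le (Finset.measurable_sum univ fun i _ => measurable_pi_apply i)
        measurable_const)
  exact (hmp.measure_preimage hmeas.nullMeasurableSet).symm

lemma meas_aux {ι : Type*} [Fintype ι] (c : ℝ) (s : Finset ι) :
    MeasurableSet {x : ι → ℝ | (∀ i, 0 ≤ x i) ∧ ∑ i ∈ s, x i ≤ c} := by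
  rw [Set.setOf_and, Set.setOf_forall]
  exact (MeasurableSet.iInter fun i =>
    measurableSet_le measurable_const (measurable_pi_apply i)).inter
    (measurableSet_le (Finset.measurable_sum s fun i _ => measurable_pi_apply i)
      measurable_const)

lemma volume_piece (n : ℕ) (a b : ℝ) (ha : 0 ≤ a) (hb : 0 ≤ b) (J : Finset (Fin n)) :
    volume {x : Fin n → ℝ | (∀ i, 0 ≤ if i ∈ J then -x i else x i) ∧
        (∑ i ∈ J, (-x i) ≤ a ∧ ∑ i ∈ Jᶜ, x i ≤ b)}
      = ENNReal.ofReal (a ^ J.card / (J.card).factorial)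
        * ENNReal.ofReal (b ^ (n - J.card) / (n - J.card).factorial) := by
  set P' : Set (Fin n → ℝ) :=
    {x | (∀ i, 0 ≤ x i) ∧ (∑ i ∈ J, x i ≤ a ∧ ∑ i ∈ Jᶜ, x i ≤ b)} with hP'
  have hP'meas : MeasurableSet P' := by
    rw [hP', Set.setOf_and, Set.setOf_and, Set.setOf_forall]
    exact (MeasurableSet.iInter fun i =>
      measurableSet_le measurable_const (measurable_pi_apply i)).inter
      ((measurableSet_le (Finset.measurable_sum J fun i _ => measurable_pi_apply i)
        measurable_const).inter
       (measurableSet_le (Finset.measurable_sum Jᶜ fun i _ => measurable_pi_apply i)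
        measurable_const))
  -- reflection
  have hrmp : MeasurePreserving (fun (x : Fin n → ℝ) i => if i ∈ J then -x i else x i)
      volume volume := by
    have h1 : ∀ i : Fin n, MeasurePreserving (fun t : ℝ => if i ∈ J then -t else t)
        volume volume := by
      intro i
      by_cases hi : i ∈ J
      · simp only [hi, if_true]
        exact Measure.measurePreserving_neg volume
      · simp only [hi, if_false]
        exact MeasurePreserving.id volume
    exact measurePreserving_pi _ _ h1
  have hpre : {x : Fin n → ℝ | (∀ i, 0 ≤ if i ∈ J then -x i else x i) ∧
        (∑ i ∈ J, (-x i) ≤ a ∧ ∑ i ∈ Jᶜ, x i ≤ b)}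
      = (fun (x : Fin n → ℝ) i => if i ∈ J then -x i else x i) ⁻¹' P' := by
    ext x
    simp only [Set.mem_preimage, Set.mem_setOf_eq, hP']
    have e1 : ∑ i ∈ J, (if i ∈ J then -x i else x i) = ∑ i ∈ J, (-x i) :=
      Finset.sum_congr rfl fun i hi => if_pos hi
    have e2 : ∑ i ∈ Jᶜ, (if i ∈ J then -x i else x i) = ∑ i ∈ Jᶜ, x i :=
      Finset.sum_congr rfl fun i hi => if_neg (Finset.mem_compl.mp hi)
    rw [e1, e2]
  rw [hpre, hrmp.measure_preimage hP'meas.nullMeasurableSet]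
  -- product split
  set e := MeasurableEquiv.piEquivPiSubtypeProd (fun _ : Fin n => ℝ) (· ∈ J) with he
  set A : Set ({i : Fin n // i ∈ J} → ℝ) := {u | (∀ i, 0 ≤ u i) ∧ ∑ i, u i ≤ a} with hA
  set B : Set ({i : Fin n // ¬ i ∈ J} → ℝ) := {u | (∀ i, 0 ≤ u i) ∧ ∑ i, u i ≤ b} with hB
  have hsplit : P' = e ⁻¹' (A ×ˢ B) := by
    ext x
    simp only [Set.mem_preimage, Set.mem_prod, Set.mem_setOf_eq, hP', hA, hB, he,
      MeasurableEquiv.piEquivPiSubtypeProd, MeasurableEquiv.coe_mk,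
      Equiv.piEquivPiSubtypeProd_apply]
    have s1 : ∑ i ∈ J, x i = ∑ i : {i : Fin n // i ∈ J}, x i :=
      Finset.sum_subtype J (fun i => Iff.rfl) x
    have s2 : ∑ i ∈ Jᶜ, x i = ∑ i : {i : Fin n // ¬ i ∈ J}, x i :=
      Finset.sum_subtype Jᶜ (fun i => Finset.mem_compl) x
    rw [s1, s2]
    constructor
    · rintro ⟨h1, h2, h3⟩
      exact ⟨⟨fun i => h1 i, h2⟩, ⟨fun i => h1 i, h3⟩⟩
    · rintro ⟨⟨h1, h2⟩, ⟨h3, h4⟩⟩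
      refine ⟨fun i => ?_, h2, h4⟩
      by_cases hi : i ∈ J
      · exact h1 ⟨i, hi⟩
      · exact h3 ⟨i, hi⟩
  have hABmeas : MeasurableSet (A ×ˢ B) := by
    have : A = {x : {i : Fin n // i ∈ J} → ℝ | (∀ i, 0 ≤ x i) ∧ ∑ i ∈ univ, x i ≤ a} := by
      simp [hA]
    have hBm : B = {x : {i : Fin n // ¬ i ∈ J} → ℝ |
        (∀ i, 0 ≤ x i) ∧ ∑ i ∈ univ, x i ≤ b} := by simp [hB]
    rw [this, hBm]
    exact (meas_aux a univ).prod (meas_aux b univ)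
  rw [hsplit]
  have hmp2 := (MeasureTheory.volume_preserving_piEquivPiSubtypeProd (fun _ : Fin n => ℝ)
    (· ∈ J)).measure_preimage hABmeas.nullMeasurableSet
  rw [hmp2]
  rw [Measure.volume_eq_prod, Measure.prod_prod]
  have cA : Fintype.card {i : Fin n // i ∈ J} = J.card := Fintype.card_coe J
  have cB : Fintype.card {i : Fin n // ¬ i ∈ J} = n - J.card := by
    rw [Fintype.card_subtype_compl, Fintype.card_fin, Fintype.card_coe]
  rw [hA, hB]
  have vA := volume_corner_simplex' {i : Fin n // i ∈ J} a ha
  have vB := volume_corner_simplex' {i : Fin n // ¬ i ∈ J} b hb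
  rw [Subsingleton.elim (Subtype.fintype fun x : Fin n => x ∈ J) (Finset.Subtype.fintype J)]
  rw [← cB, ← cA]
  exact congrArg₂ (· * ·) vA vB

lemma key_ineq {γ p q : ℝ} :
    p + q + |1 + p - q| ≤ γ ↔ p ≤ (γ-1)/2 ∧ q ≤ (γ+1)/2 := by
  constructor
  · intro h
    constructor
    · have := le_abs_self (1 + p - q); linarith
    · have := neg_abs_le (1 + p - q); linarith
  · rintro ⟨h1, h2⟩
    rcases abs_cases (1 + p - q) with ⟨he, _⟩ | ⟨he, _⟩ <;> rw [he] <;> linarith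

lemma volume_hyperplane (n : ℕ) (i : Fin n) : volume {x : Fin n → ℝ | x i = 0} = 0 := by
  classical
  have hsub : {x : Fin n → ℝ | x i = 0}
      ⊆ Set.pi Set.univ (fun j => if j = i then ({0} : Set ℝ) else Set.univ) := by
    intro x hx j _
    by_cases hj : j = i
    · subst hj; simp only [if_pos rfl]; exact hx
    · simp [hj]
  refine measure_mono_null hsub ?_
  rw [volume_pi, Measure.pi_pi]
  refine Finset.prod_eq_zero (Finset.mem_univ i) ?_
  simp

end Helpers

/-- For every `n` and `γ ≥ 1`, the Lebesgue measure of
`E_{n,γ} = {x ∈ ℝ^n : Σ|x_j| + |1 − Σ x_j| ≤ γ}` equals `χ_n(γ)/n!`. -/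
theorem measure_E_eq_legendre (n : ℕ) (γ : ℝ) (hγ : 1 ≤ γ) :
    volume {x : EuclideanSpace ℝ (Fin n) |
        (∑ j : Fin n, |x j|) + |1 - ∑ j : Fin n, x j| ≤ γ} =
      ENNReal.ofReal (legendreChi n γ / (n.factorial : ℝ)) := by
    classical
  have ha : (0:ℝ) ≤ (γ-1)/2 := by linarith
  have hb : (0:ℝ) ≤ (γ+1)/2 := by linarith
  set S : Set (Fin n → ℝ) := {x | (∑ j : Fin n, |x j|) + |1 - ∑ j : Fin n, x j| ≤ γ}
    with hS
  have hSmeas : MeasurableSet S := by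
    refine measurableSet_le (Measurable.add ?_ ?_) measurable_const
    · exact Finset.measurable_sum univ fun j _ => (measurable_pi_apply j).abs
    · exact ((measurable_const.sub
        (Finset.measurable_sum univ fun j _ => measurable_pi_apply j))).abs
  -- transfer from EuclideanSpace
  have htrans : volume {x : EuclideanSpace ℝ (Fin n) |
      (∑ j : Fin n, |x j|) + |1 - ∑ j : Fin n, x j| ≤ γ} = volume S := by
    have hpre : {x : EuclideanSpace ℝ (Fin n) |
        (∑ j : Fin n, |x j|) + |1 - ∑ j : Fin n, x j| ≤ γ}
        = (MeasurableEquiv.toLp 2 (Fin n → ℝ)).symm ⁻¹' S := rfl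
    rw [hpre]
    exact (EuclideanSpace.volume_preserving_symm_measurableEquiv_toLp (Fin n)).measure_preimage
      hSmeas.nullMeasurableSet
  rw [htrans]
  -- partition by sign patterns
  set D : Finset (Fin n) → Set (Fin n → ℝ) :=
    fun J => {x | ∀ i, (i ∈ J → x i < 0) ∧ (i ∉ J → 0 ≤ x i)} with hD
  have hDmeas : ∀ J, MeasurableSet (D J) := by
    intro J
    rw [hD]
    simp only [Set.setOf_forall]
    refine MeasurableSet.iInter fun i => ?_
    by_cases hi : i ∈ J
    · simp only [hi, not_true, true_implies, false_implies, and_true]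
      exact measurableSet_lt (measurable_pi_apply i) measurable_const
    · simp only [hi, not_false_iff, false_implies, true_implies, true_and]
      exact measurableSet_le measurable_const (measurable_pi_apply i)
  have hcover : S = ⋃ J : Finset (Fin n), S ∩ D J := by
    ext x
    simp only [Set.mem_iUnion, Set.mem_inter_iff]
    constructor
    · intro hx
      refine ⟨univ.filter (fun i => x i < 0), hx, fun i => ⟨fun hi => ?_, fun hi => ?_⟩⟩
      · exact (Finset.mem_filter.mp hi).2
      · by_contra hc
        exact hi (Finset.mem_filter.mpr ⟨Finset.mem_univ i, by linarith⟩)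
    · rintro ⟨J, hx, _⟩; exact hx
  have hdisj : Pairwise (Function.onFun Disjoint fun J : Finset (Fin n) => S ∩ D J) := by
    intro J K hJK
    refine Set.disjoint_left.mpr fun x hxJ hxK => ?_
    have : ∃ i, ¬ (i ∈ J ↔ i ∈ K) := by
      by_contra hc
      push_neg at hc
      exact hJK (Finset.ext_iff.mpr fun i => hc i)
    obtain ⟨i, hi⟩ := this
    rcases Classical.em (i ∈ J) with hiJ | hiJ
    · have hiK : i ∉ K := fun h => hi ⟨fun _ => h, fun _ => hiJ⟩
      have h1 := (hxJ.2 i).1 hiJ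
      have h2 := (hxK.2 i).2 hiK
      linarith
    · have hiK : i ∈ K := by
        by_contra hiK
        exact hi ⟨fun h => absurd h hiJ, fun h => absurd h hiK⟩
      have h1 := (hxK.2 i).1 hiK
      have h2 := (hxJ.2 i).2 hiJ
      linarith
  rw [hcover, measure_iUnion hdisj fun J => hSmeas.inter (hDmeas J), tsum_fintype]
  -- per-piece volume
  have hpiece : ∀ J : Finset (Fin n), volume (S ∩ D J)
      = ENNReal.ofReal (((γ-1)/2) ^ J.card / (J.card).factorial)
        * ENNReal.ofReal (((γ+1)/2) ^ (n - J.card) / (n - J.card).factorial) := by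
    intro J
    set P : Set (Fin n → ℝ) := {x | (∀ i, 0 ≤ if i ∈ J then -x i else x i) ∧
        (∑ i ∈ J, (-x i) ≤ (γ-1)/2 ∧ ∑ i ∈ Jᶜ, x i ≤ (γ+1)/2)} with hP
    -- membership characterization
    have hchar : ∀ x : Fin n → ℝ, (∀ i ∈ J, x i ≤ 0) → (∀ i ∉ J, 0 ≤ x i) →
        (x ∈ S ↔ (∑ i ∈ J, (-x i) ≤ (γ-1)/2 ∧ ∑ i ∈ Jᶜ, x i ≤ (γ+1)/2)) := by
      intro x hneg hpos
      have habs : ∑ j, |x j| = (∑ i ∈ J, (-x i)) + ∑ i ∈ Jᶜ, x i := by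
        rw [← Finset.sum_add_sum_compl J (fun j => |x j|)]
        congr 1
        · exact Finset.sum_congr rfl fun i hi => abs_of_nonpos (hneg i hi)
        · exact Finset.sum_congr rfl fun i hi =>
            abs_of_nonneg (hpos i (Finset.mem_compl.mp hi))
      have hsum : ∑ j, x j = (∑ i ∈ Jᶜ, x i) - ∑ i ∈ J, (-x i) := by
        rw [← Finset.sum_add_sum_compl J (fun j => x j)]
        simp [Finset.sum_neg_distrib]
        ring
      have hp : 0 ≤ ∑ i ∈ J, (-x i) :=
        Finset.sum_nonneg fun i hi => by linarith [hneg i hi]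
      have hq : 0 ≤ ∑ i ∈ Jᶜ, x i :=
        Finset.sum_nonneg fun i hi => hpos i (Finset.mem_compl.mp hi)
      rw [hS]
      simp only [Set.mem_setOf_eq]
      rw [habs, hsum]
      have : 1 - ((∑ i ∈ Jᶜ, x i) - ∑ i ∈ J, (-x i))
          = 1 + (∑ i ∈ J, (-x i)) - ∑ i ∈ Jᶜ, x i := by ring
      rw [this]
      exact key_ineq
    have hsub1 : S ∩ D J ⊆ P := by
      rintro x ⟨hxS, hxD⟩
      have hneg : ∀ i ∈ J, x i ≤ 0 := fun i hi => le_of_lt ((hxD i).1 hi)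
      have hpos : ∀ i ∉ J, 0 ≤ x i := fun i hi => (hxD i).2 hi
      refine ⟨fun i => ?_, (hchar x hneg hpos).mp hxS⟩
      by_cases hi : i ∈ J
      · simp only [hi, if_true]; linarith [hneg i hi]
      · simp only [hi, if_false]; exact hpos i hi
    have hsub2 : P ⊆ (S ∩ D J) ∪ ⋃ i ∈ J, {x : Fin n → ℝ | x i = 0} := by
      rintro x ⟨hx1, hx2⟩
      by_cases hz : ∃ i ∈ J, x i = 0
      · obtain ⟨i, hi, hxi⟩ := hz
        exact Or.inr (Set.mem_biUnion hi hxi)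
      · push_neg at hz
        left
        have hneg : ∀ i ∈ J, x i ≤ 0 := by
          intro i hi
          have := hx1 i
          rw [if_pos hi] at this
          linarith
        have hpos : ∀ i ∉ J, 0 ≤ x i := by
          intro i hi
          have := hx1 i
          rwa [if_neg hi] at this
        refine ⟨(hchar x hneg hpos).mpr hx2, fun i => ⟨fun hi => ?_, fun hi => hpos i hi⟩⟩
        exact lt_of_le_of_ne (hneg i hi) (hz i hi)
    have hnull : volume (⋃ i ∈ J, {x : Fin n → ℝ | x i = 0}) = 0 := by
      refine measure_biUnion_null_iff (J.countable_toSet) |>.mpr fun i _ => ?_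
      exact volume_hyperplane n i
    have h1 : volume (S ∩ D J) ≤ volume P := measure_mono hsub1
    have h2 : volume P ≤ volume (S ∩ D J) := by
      calc volume P ≤ volume (S ∩ D J) + volume (⋃ i ∈ J, {x : Fin n → ℝ | x i = 0}) :=
            le_trans (measure_mono hsub2) (measure_union_le _ _)
        _ = volume (S ∩ D J) := by rw [hnull, add_zero]
    have : volume (S ∩ D J) = volume P := le_antisymm h1 h2
    rw [this, hP, volume_piece n _ _ ha hb J]
  simp only [hpiece]
  -- summation
  have hterm : ∀ J : Finset (Fin n),
      ENNReal.ofReal (((γ-1)/2) ^ J.card / (J.card).factorial)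
        * ENNReal.ofReal (((γ+1)/2) ^ (n - J.card) / (n - J.card).factorial)
      = ENNReal.ofReal ((((γ-1)/2) ^ J.card / (J.card).factorial)
          * (((γ+1)/2) ^ (n - J.card) / (n - J.card).factorial)) := by
    intro J
    rw [ENNReal.ofReal_mul (by positivity)]
  simp only [hterm]
  rw [← ENNReal.ofReal_sum_of_nonneg (fun J _ => by positivity)]
  congr 1
  -- real identity
  have hsum1 : ∑ J : Finset (Fin n),
      (((γ-1)/2) ^ J.card / (J.card).factorial)
        * (((γ+1)/2) ^ (n - J.card) / (n - J.card).factorial)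
      = ∑ k ∈ Finset.range (n+1), (n.choose k : ℝ) •
          ((((γ-1)/2) ^ k / (k).factorial) * (((γ+1)/2) ^ (n - k) / (n - k).factorial)) := by
    rw [← Finset.powerset_univ]
    have := Finset.sum_powerset_apply_card
      (fun m => (((γ-1)/2) ^ m / (m).factorial)
        * (((γ+1)/2) ^ (n - m) / (n - m).factorial)) (x := (univ : Finset (Fin n)))
    rw [this, Finset.card_univ, Fintype.card_fin]
    refine Finset.sum_congr rfl fun k _ => ?_
    rw [nsmul_eq_mul]
    norm_num
  rw [hsum1]
  unfold legendreChi
  rw [legendre_sum n γ, Finset.mul_sum, Finset.mul_sum, Finset.sum_div]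
  refine Finset.sum_congr rfl fun k hk => ?_
  have hkn : k ≤ n := Nat.lt_succ_iff.mp (Finset.mem_range.mp hk)
  rw [smul_eq_mul]
  have e4 : (n.choose k : ℝ) * k.factorial * (n-k).factorial = n.factorial := by
    exact_mod_cast congrArg (Nat.cast : ℕ → ℝ) (Nat.choose_mul_factorial_mul_factorial hkn)
  have h2n : (2:ℝ)^k * 2^(n-k) = 2^n := by
    rw [← pow_add]
    congr 1
    omega
  have hkf : (k.factorial : ℝ) ≠ 0 := Nat.cast_ne_zero.mpr k.factorial_ne_zero
  have hnkf : ((n-k).factorial : ℝ) ≠ 0 := Nat.cast_ne_zero.mpr (n-k).factorial_ne_zero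
  have hnf : (n.factorial : ℝ) ≠ 0 := Nat.cast_ne_zero.mpr n.factorial_ne_zero
  have h2 : (2:ℝ)^n ≠ 0 := by positivity
  rw [div_pow, div_pow]
  field_simp
  rw [← h2n]
  linear_combination (-((n.choose k : ℝ) * (γ-1)^k
    * 2^k * 2^(n-k))) * e4
end

section
/- Suppose n+1 is an Hadamard number, i.e., there exists an Hadamard matrix of order n+1. Then there exists a regular n-dimensional simplex S (all edges of equal length, namely √((n+1)/2)) all of whose vertices are vertices of the unit cube Q_n, such that: ξ(S) = α(S) = n, hence ξ_n = n; d_i(S) = 1 for every i = 1,…,n; and the simplex nS is circumscribed around Q_n in such a way that each (n−1)-dimensional face of nS contains exactly one vertex of Q_n. -/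
open Set MeasureTheory Finset Metric

noncomputable section

namespace Aux

variable {n : ℕ}

lemma convex_unitCube (n : ℕ) : Convex ℝ (unitCube n) := by
  intro x hx y hy a b ha hb hab i
  have : (a • x + b • y) i = a * x i + b * y i := by
    simp [PiLp.add_apply, PiLp.smul_apply, smul_eq_mul]
  rw [this]
  exact (convex_Icc (0:ℝ) 1) (hx i) (hy i) ha hb hab

lemma mem_simplexSet_iff (b : AffineBasis (Fin (n+1)) ℝ (EuclideanSpace ℝ (Fin n)))
    (x : EuclideanSpace ℝ (Fin n)) :
    x ∈ simplexSet ⇑b ↔ ∀ j, 0 ≤ b.coord j x := by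
  rw [simplexSet, b.convexHull_eq_nonneg_coord]; rfl

lemma coord_centroid (b : AffineBasis (Fin (n+1)) ℝ (EuclideanSpace ℝ (Fin n))) (j : Fin (n+1)) :
    b.coord j (simplexCentroid ⇑b) = ((n:ℝ)+1)⁻¹ := by
  have := b.coord_apply_centroid (s := Finset.univ) (i := j) (Finset.mem_univ j)
  simpa [simplexCentroid, Finset.card_univ] using this

lemma affine_homothety (f : EuclideanSpace ℝ (Fin n) →ᵃ[ℝ] ℝ)
    (c x : EuclideanSpace ℝ (Fin n)) (σ : ℝ) :
    f (c + σ • (x - c)) = f c + σ * (f x - f c) := by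
  have h1 : c + σ • (x - c) = σ • (x - c) +ᵥ c := add_comm _ _
  rw [h1, f.map_vadd, f.linear.map_smul]
  have h2 : f.linear (x - c) = f x - f c := f.linearMap_vsub x c
  rw [h2]
  simp [vadd_eq_add, smul_eq_mul]
  ring

lemma mem_simplexHomothet_iff (b : AffineBasis (Fin (n+1)) ℝ (EuclideanSpace ℝ (Fin n)))
    {σ : ℝ} (hσ : 0 < σ) (x : EuclideanSpace ℝ (Fin n)) :
    x ∈ simplexHomothet ⇑b σ ↔ ∀ j, (1 - σ) * ((n:ℝ)+1)⁻¹ ≤ b.coord j x := by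
  set c := simplexCentroid ⇑b with hc
  have hκ : (0:ℝ) < ((n:ℝ)+1)⁻¹ := by positivity
  constructor
  · rintro ⟨y, hy, rfl⟩ j
    have hy' := (mem_simplexSet_iff b y).1 hy j
    rw [affine_homothety, coord_centroid]
    nlinarith [coord_centroid b j]
  · intro h
    refine ⟨c + σ⁻¹ • (x - c), ?_, ?_⟩
    · rw [mem_simplexSet_iff]
      intro j
      rw [affine_homothety, coord_centroid]
      have := h j
      have hσ' : (0:ℝ) < σ⁻¹ := by positivity
      have h2 : σ⁻¹ * (σ * ((n:ℝ)+1)⁻¹) = ((n:ℝ)+1)⁻¹ := by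
        field_simp
      nlinarith [h j]
    · show simplexCentroid ⇑b + σ • (c + σ⁻¹ • (x - c) - simplexCentroid ⇑b) = x
      rw [← hc]
      have : c + σ⁻¹ • (x - c) - c = σ⁻¹ • (x - c) := by abel
      rw [this, smul_smul, mul_inv_cancel₀ hσ.ne', one_smul]
      abel


lemma euclid_decomp (x : EuclideanSpace ℝ (Fin n)) :
    x = ∑ i, x i • EuclideanSpace.single i (1:ℝ) := by
  apply PiLp.ext
  intro i'
  have h : (∑ i, x i • EuclideanSpace.single i (1:ℝ)) i'
      = ∑ i, (x i • EuclideanSpace.single i (1:ℝ)) i' := by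
      rw [WithLp.ofLp_sum, Finset.sum_apply]
  rw [h]
  simp [EuclideanSpace.single_apply]

lemma affine_apply_eq (f : EuclideanSpace ℝ (Fin n) →ᵃ[ℝ] ℝ) (x : EuclideanSpace ℝ (Fin n)) :
    f x = ∑ i, f.linear (EuclideanSpace.single i 1) * x i + f 0 := by
  have h0 : f x = f.linear x + f 0 := by
    have := f.map_vadd (0 : EuclideanSpace ℝ (Fin n)) x
    simpa [vadd_eq_add] using this
  rw [h0]
  congr 1
  conv_lhs => rw [euclid_decomp x]
  rw [map_sum]
  refine Finset.sum_congr rfl fun i _ => ?_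
  rw [f.linear.map_smul]
  simp [smul_eq_mul]
  ring

lemma affine_apply_add_single (f : EuclideanSpace ℝ (Fin n) →ᵃ[ℝ] ℝ)
    (x : EuclideanSpace ℝ (Fin n)) (s : ℝ) (i : Fin n) :
    f (x + s • EuclideanSpace.single i (1:ℝ))
      = f x + s * f.linear (EuclideanSpace.single i 1) := by
  have h1 : x + s • EuclideanSpace.single i (1:ℝ)
      = (s • EuclideanSpace.single i (1:ℝ)) +ᵥ x := add_comm _ _
  rw [h1, f.map_vadd, f.linear.map_smul]
  simp [vadd_eq_add, smul_eq_mul]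
  ring

lemma affine_apply_sub (f : EuclideanSpace ℝ (Fin n) →ᵃ[ℝ] ℝ)
    (x t : EuclideanSpace ℝ (Fin n)) :
    f (x - t) = f x - f.linear t := by
  have h1 : x - t = (-t) +ᵥ x := by
    simp [vadd_eq_add]; abel
  rw [h1, f.map_vadd, map_neg]
  simp [vadd_eq_add]
  ring

lemma general_lower_bound (hn : 0 < n) (b : AffineBasis (Fin (n+1)) ℝ (EuclideanSpace ℝ (Fin n)))
    (hSQ : simplexSet ⇑b ⊆ unitCube n) {σ : ℝ} (t : EuclideanSpace ℝ (Fin n))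
    (hcov : ∀ x ∈ unitCube n, ∀ j, (1 - σ) * ((n:ℝ)+1)⁻¹ ≤ b.coord j (x - t)) :
    (n : ℝ) ≤ σ := by
  set a : Fin (n+1) → Fin n → ℝ :=
    fun j i => (b.coord j).linear (EuclideanSpace.single i 1) with ha
  set β : Fin (n+1) → ℝ := fun j => b.coord j 0 with hβ
  have happly : ∀ j x, b.coord j x = ∑ i, a j i * x i + β j := fun j x => affine_apply_eq _ x
  have hsumβ : ∑ j, β j = 1 := b.sum_coord_apply_eq_one 0
  have hsuma : ∀ i, ∑ j, a j i = 0 := by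
    intro i
    have h1 : ∑ j, b.coord j (EuclideanSpace.single i 1) = 1 := b.sum_coord_apply_eq_one _
    have h2 : ∀ j, b.coord j (EuclideanSpace.single i 1) = a j i + β j := by
      intro j; rw [happly]
      congr 1
      rw [Finset.sum_eq_single i]
      · simp [EuclideanSpace.single_apply]
      · intro i' _ hne; simp [EuclideanSpace.single_apply, hne]
      · simp
    rw [Finset.sum_congr rfl (fun j _ => h2 j), Finset.sum_add_distrib, hsumβ] at h1
    linarith
  have hmemS : ∀ x : EuclideanSpace ℝ (Fin n), (∀ j, 0 ≤ b.coord j x) → x ∈ unitCube n :=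
    fun x hx => hSQ ((mem_simplexSet_iff b x).2 hx)
  have habs : ∀ i, 2 ≤ ∑ j, |a j i| := by
    intro i
    set m := ∑ j, |a j i| with hm
    have hm0 : 0 ≤ m := Finset.sum_nonneg fun j _ => abs_nonneg _
    rcases eq_or_lt_of_le hm0 with hzero | hpos
    · exfalso
      have hai : ∀ j, a j i = 0 := by
        intro j
        have := (Finset.sum_eq_zero_iff_of_nonneg
          (fun j _ => abs_nonneg (a j i))).1 hzero.symm j (Finset.mem_univ j)
        exact abs_eq_zero.1 this
      set c := simplexCentroid ⇑b with hcdef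
      have hc : ∀ j, b.coord j c = ((n:ℝ)+1)⁻¹ := coord_centroid b
      have hcQ : c ∈ unitCube n := hmemS c (fun j => by rw [hc]; positivity)
      have hc2Q : c + (2:ℝ) • EuclideanSpace.single i (1:ℝ) ∈ unitCube n := by
        apply hmemS
        intro j
        rw [affine_apply_add_single, hc]
        have : (b.coord j).linear (EuclideanSpace.single i 1) = a j i := rfl
        rw [this, hai]
        positivity
      have h1 := (hcQ i).1
      have h2 := (hc2Q i).2
      have h3 : (c + (2:ℝ) • EuclideanSpace.single i (1:ℝ)) i = c i + 2 := by
        simp [PiLp.add_apply, PiLp.smul_apply, EuclideanSpace.single_apply]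
      rw [h3] at h2; linarith
    · set w : Fin (n+1) → ℝ := fun j => |a j i| / m with hw
      have hwsum : ∑ j, w j = 1 := by
        rw [hw]
        simp only [← Finset.sum_div]
        rw [← hm, div_self hpos.ne']
      set y := Finset.univ.affineCombination ℝ ⇑b w with hy
      have hcy : ∀ j, b.coord j y = w j := fun j =>
        b.coord_apply_combination_of_mem (Finset.mem_univ j) hwsum
      have hy1 : y + (-m⁻¹) • EuclideanSpace.single i (1:ℝ) ∈ unitCube n := by
        apply hmemS; intro j
        rw [affine_apply_add_single, hcy]
        have h4 : (b.coord j).linear (EuclideanSpace.single i 1) = a j i := rfl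
        have hwj : w j = |a j i| / m := rfl
        rw [h4, hwj]
        have h5 : |a j i| / m + -m⁻¹ * a j i = (|a j i| - a j i) / m := by
          field_simp; try ring
        rw [h5]
        apply div_nonneg _ hpos.le
        linarith [le_abs_self (a j i)]
      have hy2 : y + m⁻¹ • EuclideanSpace.single i (1:ℝ) ∈ unitCube n := by
        apply hmemS; intro j
        rw [affine_apply_add_single, hcy]
        have h4 : (b.coord j).linear (EuclideanSpace.single i 1) = a j i := rfl
        have hwj : w j = |a j i| / m := rfl
        rw [h4, hwj]
        have h5 : |a j i| / m + m⁻¹ * a j i = (|a j i| + a j i) / m := by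
          field_simp; try ring
        rw [h5]
        apply div_nonneg _ hpos.le
        linarith [neg_abs_le (a j i)]
      have e1 : (y + (-m⁻¹) • EuclideanSpace.single i (1:ℝ)) i = y i - m⁻¹ := by
        simp [PiLp.add_apply, PiLp.smul_apply, EuclideanSpace.single_apply]
        ring
      have e2 : (y + m⁻¹ • EuclideanSpace.single i (1:ℝ)) i = y i + m⁻¹ := by
        simp [PiLp.add_apply, PiLp.smul_apply, EuclideanSpace.single_apply]
      have h1 := (hy1 i).1
      have h2 := (hy2 i).2
      rw [e1] at h1; rw [e2] at h2
      have hmm : m⁻¹ * m = 1 := inv_mul_cancel₀ hpos.ne'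
      have h6 : (0:ℝ) ≤ 1 - 2*m⁻¹ := by linarith
      have h7 := mul_nonneg h6 hpos.le
      nlinarith [hmm]
  -- main argument
  have hL : ∀ j, (b.coord j).linear t = b.coord j t - β j := by
    intro j
    have h := affine_apply_sub (b.coord j) t t
    rw [sub_self] at h
    have hb : b.coord j 0 = β j := rfl
    rw [hb] at h
    linarith
  set z : Fin (n+1) → EuclideanSpace ℝ (Fin n) :=
    fun j => WithLp.toLp 2 (fun i => if a j i < 0 then (1:ℝ) else 0) with hzdef
  have hzQ : ∀ j, z j ∈ unitCube n := by
    intro j i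
    have : z j i = if a j i < 0 then (1:ℝ) else 0 := rfl
    rw [this]
    split_ifs <;> norm_num
  have hzval : ∀ j, b.coord j (z j) = (∑ i, min (a j i) 0) + β j := by
    intro j
    rw [happly]
    congr 1
    refine Finset.sum_congr rfl fun i _ => ?_
    have hz : z j i = if a j i < 0 then (1:ℝ) else 0 := rfl
    rw [hz]
    by_cases h : a j i < 0
    · rw [if_pos h, mul_one, min_eq_left h.le]
    · rw [if_neg h, mul_zero, min_eq_right (not_lt.1 h)]
  have key : ∀ j, (1 - σ) * ((n:ℝ)+1)⁻¹
      ≤ (∑ i, min (a j i) 0) + (2 * β j - b.coord j t) := by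
    intro j
    have h := hcov (z j) (hzQ j) j
    have h2 : b.coord j (z j - t) = (∑ i, min (a j i) 0) + (2 * β j - b.coord j t) := by
      rw [affine_apply_sub, hzval, hL]
      ring
    linarith [h2 ▸ h]
  have hsum := Finset.sum_le_sum (fun j (_ : j ∈ Finset.univ) => key j)
  rw [Finset.sum_const, Finset.card_univ, Fintype.card_fin] at hsum
  have hRHS : ∑ j, ((∑ i, min (a j i) 0) + (2 * β j - b.coord j t))
      = (∑ j, ∑ i, min (a j i) 0) + 1 := by
    rw [Finset.sum_add_distrib]
    have h1 : ∑ j, (2 * β j - b.coord j t) = 1 := by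
      rw [Finset.sum_sub_distrib, ← Finset.mul_sum, hsumβ, b.sum_coord_apply_eq_one t]
      norm_num
    rw [h1]
  rw [hRHS] at hsum
  have hmin : ∀ i : Fin n, ∑ j, min (a j i) 0 ≤ -1 := by
    intro i
    have h1 : ∀ j : Fin (n+1), min (a j i) 0 = (a j i - |a j i|)/2 := by
      intro j
      rcases le_or_gt 0 (a j i) with h | h
      · rw [min_eq_right h, abs_of_nonneg h]; ring
      · rw [min_eq_left h.le, abs_of_neg h]; ring
    rw [Finset.sum_congr rfl (fun j _ => h1 j), ← Finset.sum_div, Finset.sum_sub_distrib,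
      hsuma i]
    have := habs i
    linarith
  have hswap : ∑ j, ∑ i, min (a j i) 0 = ∑ i : Fin n, ∑ j, min (a j i) 0 :=
    Finset.sum_comm
  have hmin2 : ∑ j, ∑ i, min (a j i) 0 ≤ -(n:ℝ) := by
    rw [hswap]
    calc ∑ i : Fin n, ∑ j, min (a j i) 0 ≤ ∑ i : Fin n, (-1 : ℝ) :=
          Finset.sum_le_sum fun i _ => hmin i
      _ = -(n:ℝ) := by rw [Finset.sum_const, Finset.card_univ, Fintype.card_fin]; simp
  have hκ1 : ((n:ℝ)+1) * ((n:ℝ)+1)⁻¹ = 1 := mul_inv_cancel₀ (by positivity)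
  have hfin : ((n:ℝ)+1) * ((1 - σ) * ((n:ℝ)+1)⁻¹) = 1 - σ := by
    rw [← mul_assoc, mul_comm ((n:ℝ)+1) (1-σ), mul_assoc, hκ1, mul_one]
  have hns : (n+1 : ℕ) • ((1 - σ) * ((n:ℝ)+1)⁻¹) = ((n:ℝ)+1) * ((1 - σ) * ((n:ℝ)+1)⁻¹) := by
    rw [nsmul_eq_mul]; push_cast; ring
  rw [hns, hfin] at hsum
  linarith

lemma exists_cover (b : AffineBasis (Fin (n+1)) ℝ (EuclideanSpace ℝ (Fin n))) :
    ∃ σ : ℝ, 1 ≤ σ ∧ unitCube n ⊆ simplexHomothet ⇑b σ := by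
  set a : Fin (n+1) → Fin n → ℝ :=
    fun j i => (b.coord j).linear (EuclideanSpace.single i 1) with ha
  set β : Fin (n+1) → ℝ := fun j => b.coord j 0 with hβ
  have happly : ∀ j x, b.coord j x = ∑ i, a j i * x i + β j := fun j x => affine_apply_eq _ x
  set C : ℝ := ∑ j, ((∑ i, |a j i|) + |β j|) with hC
  have hterm0 : ∀ j : Fin (n+1), 0 ≤ (∑ i, |a j i|) + |β j| := fun j =>
    add_nonneg (Finset.sum_nonneg fun i _ => abs_nonneg _) (abs_nonneg _)
  have hC0 : 0 ≤ C := Finset.sum_nonneg fun j _ => hterm0 j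
  refine ⟨1 + ((n:ℝ)+1) * C, by nlinarith, ?_⟩
  intro x hx
  rw [mem_simplexHomothet_iff b (by positivity)]
  intro j
  have h1 : (1 - (1 + ((n:ℝ)+1) * C)) * ((n:ℝ)+1)⁻¹ = -C := by
    have : ((n:ℝ)+1) ≠ 0 := by positivity
    field_simp; ring
  rw [h1, happly]
  have hterm : ∀ i, -(|a j i|) ≤ a j i * x i := by
    intro i
    have h0 := (hx i).1
    have h2 := (hx i).2
    rcases abs_cases (a j i) with ⟨he, hp⟩ | ⟨he, hp⟩ <;> nlinarith
  have hs : -(∑ i, |a j i|) ≤ ∑ i, a j i * x i := by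
    have := Finset.sum_le_sum fun i (_ : i ∈ Finset.univ) => hterm i
    rw [Finset.sum_neg_distrib] at this
    exact this
  have hsingle : (∑ i, |a j i|) + |β j| ≤ C :=
    Finset.single_le_sum (fun j (_ : j ∈ Finset.univ) => hterm0 j) (Finset.mem_univ j)
  have := neg_abs_le (β j)
  linarith


lemma affine_decomp (f : EuclideanSpace ℝ (Fin n) →ᵃ[ℝ] ℝ) (x : EuclideanSpace ℝ (Fin n)) :
    f x = f.linear x + f 0 := by
  have := f.map_vadd (0 : EuclideanSpace ℝ (Fin n)) x
  simpa [vadd_eq_add] using this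

def afun (w : EuclideanSpace ℝ (Fin n)) (c : ℝ) : EuclideanSpace ℝ (Fin n) →ᵃ[ℝ] ℝ where
  toFun x := (∑ i, w i * x i) + c
  linear :=
    { toFun := fun x => ∑ i, w i * x i
      map_add' := by
        intro x y
        simp only [PiLp.add_apply, mul_add]
        rw [Finset.sum_add_distrib]
      map_smul' := by
        intro r x
        simp only [PiLp.smul_apply, smul_eq_mul, RingHom.id_apply, Finset.mul_sum]
        exact Finset.sum_congr rfl fun i _ => by ring }
  map_vadd' p v := by
    simp only [vadd_eq_add, PiLp.add_apply, mul_add, LinearMap.coe_mk, AddHom.coe_mk]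
    rw [Finset.sum_add_distrib]
    ring

lemma afun_apply (w : EuclideanSpace ℝ (Fin n)) (c : ℝ) (x : EuclideanSpace ℝ (Fin n)) :
    afun w c x = (∑ i, w i * x i) + c := rfl

lemma afun_linear_apply (w : EuclideanSpace ℝ (Fin n)) (c : ℝ) (x : EuclideanSpace ℝ (Fin n)) :
    (afun w c).linear x = ∑ i, w i * x i := rfl


set_option maxHeartbeats 2000000 in
theorem main (hn : 0 < n) (G : Matrix (Fin (n+1)) (Fin (n+1)) ℝ)
    (hpm : ∀ i j, G i j = 1 ∨ G i j = -1) (hcol : ∀ j, G j 0 = 1)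
    (hGG : ∀ j k, ∑ m, G j m * G k m = if j = k then ((n:ℝ)+1) else 0)
    (hGtG : ∀ m l, ∑ j, G j m * G j l = if m = l then ((n:ℝ)+1) else 0) :
    ∃ (v : Fin (n + 1) → EuclideanSpace ℝ (Fin n))
      (lam : Fin (n + 1) → (EuclideanSpace ℝ (Fin n) →ᵃ[ℝ] ℝ)),
      AffineIndependent ℝ v ∧ IsLagrangeBasis v lam ∧
      (∀ j, v j ∈ cubeVertices n) ∧
      (∀ j k, j ≠ k → dist (v j) (v k) = Real.sqrt (((n : ℝ) + 1) / 2)) ∧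
      xiInd (unitCube n) v = n ∧
      alphaInd (unitCube n) v = n ∧
      xiMin n = n ∧
      (∀ i, axialDiameter i (simplexSet v) = 1) ∧
      unitCube n ⊆ simplexHomothet v n ∧
      (∀ j, ∃! y, y ∈ cubeVertices n ∧ lam j y = (1 - (n : ℝ)) / ((n : ℝ) + 1)) := by
  have hκpos : (0:ℝ) < ((n:ℝ)+1)⁻¹ := by positivity
  set κ : ℝ := ((n:ℝ)+1)⁻¹ with hκdef
  have hκ1 : ((n:ℝ)+1) * κ = 1 := mul_inv_cancel₀ (by positivity)
  have h1n : (1:ℝ) ≤ (n:ℝ) := by exact_mod_cast hn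
  -- basic sign facts
  have hgpm : ∀ (j : Fin (n+1)) (i : Fin n), G j i.succ = 1 ∨ G j i.succ = -1 :=
    fun j i => hpm j i.succ
  have hgsq : ∀ (j : Fin (n+1)) (i : Fin n), G j i.succ * G j i.succ = 1 := by
    intro j i; rcases hgpm j i with h | h <;> rw [h] <;> norm_num
  -- row orthogonality restricted to last n coordinates
  have hrow : ∀ j k, ∑ i : Fin n, G j i.succ * G k i.succ
      = (if j = k then ((n:ℝ)+1) else 0) - 1 := by
    intro j k
    have h := hGG j k
    rw [Fin.sum_univ_succ] at h
    rw [hcol j, hcol k] at h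
    linarith
  -- column sums vanish
  have hcolsum : ∀ i : Fin n, ∑ j, G j i.succ = 0 := by
    intro i
    have h := hGtG i.succ 0
    rw [if_neg (Fin.succ_ne_zero i)] at h
    rw [← h]
    refine Finset.sum_congr rfl fun j _ => ?_
    rw [hcol j, mul_one]
  -- the vertices
  set v : Fin (n+1) → EuclideanSpace ℝ (Fin n) :=
    fun j => WithLp.toLp 2 (fun i => (G j i.succ + 1)/2) with hvdef
  have hv : ∀ j i, v j i = (G j i.succ + 1)/2 := fun j i => rfl
  have h2v : ∀ k i, 2 * v k i - 1 = G k i.succ := by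
    intro k i; rw [hv]; ring
  -- the Lagrange polynomials
  set lam : Fin (n+1) → (EuclideanSpace ℝ (Fin n) →ᵃ[ℝ] ℝ) :=
    fun j => afun (WithLp.toLp 2 (fun i => 2 * κ * G j i.succ)) (κ * (1 - ∑ i : Fin n, G j i.succ)) with hlamdef
  have hlam : ∀ j x, lam j x = κ * (1 + ∑ i, G j i.succ * (2 * x i - 1)) := by
    intro j x
    rw [show lam j x = (∑ i, (2 * κ * G j i.succ) * x i)
        + κ * (1 - ∑ i : Fin n, G j i.succ) from rfl]
    rw [mul_add, mul_one, Finset.mul_sum]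
    have hterm : ∀ i : Fin n, κ * (G j i.succ * (2 * x i - 1))
        = (2*κ*G j i.succ) * x i - κ * G j i.succ := fun i => by ring
    rw [Finset.sum_congr rfl fun i _ => hterm i, Finset.sum_sub_distrib, ← Finset.mul_sum]
    ring
  have hlinsingle : ∀ j i, (lam j).linear (EuclideanSpace.single i (1:ℝ)) = 2*κ*G j i.succ := by
    intro j i
    rw [show (lam j).linear (EuclideanSpace.single i (1:ℝ))
        = ∑ i', (2*κ*G j i'.succ) * (EuclideanSpace.single i (1:ℝ)) i' from rfl]
    rw [Finset.sum_eq_single i]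
    · simp [EuclideanSpace.single_apply]
    · intro i' _ hne
      simp [EuclideanSpace.single_apply, hne]
    · simp
  -- Lagrange property
  have hlamv : ∀ j k, lam j (v k) = if j = k then (1:ℝ) else 0 := by
    intro j k
    rw [hlam]
    rw [Finset.sum_congr rfl fun i _ => by rw [h2v k i]]
    rw [hrow j k]
    split_ifs with h
    · rw [hκdef]; field_simp; ring
    · ring
  -- affine independence
  have hindep : AffineIndependent ℝ v := by
    rw [affineIndependent_iff]
    intro s wt hw0 hcomb j hj
    have happ := congrArg ((lam j).linear) hcomb
    rw [map_sum, map_zero] at happ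
    have hterm : ∀ e : Fin (n+1), (lam j).linear (wt e • v e)
        = wt e * ((if j = e then (1:ℝ) else 0) - lam j 0) := by
      intro e
      rw [LinearMap.map_smul, smul_eq_mul]
      congr 1
      have := affine_decomp (lam j) (v e)
      rw [hlamv j e] at this
      linarith
    rw [Finset.sum_congr rfl fun e _ => hterm e] at happ
    have hsplit : ∑ e ∈ s, wt e * ((if j = e then (1:ℝ) else 0) - lam j 0)
        = (∑ e ∈ s, wt e * (if j = e then (1:ℝ) else 0)) - lam j 0 * ∑ e ∈ s, wt e := by
      rw [Finset.mul_sum, ← Finset.sum_sub_distrib]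
      exact Finset.sum_congr rfl fun e _ => by ring
    rw [hsplit, hw0, mul_zero, sub_zero] at happ
    rw [Finset.sum_eq_single j] at happ
    · rw [if_pos rfl, mul_one] at happ; exact happ
    · intro e _ hne
      rw [if_neg (Ne.symm hne), mul_zero]
    · intro hjs; exact absurd hj hjs
  -- affine basis
  have hcard : Fintype.card (Fin (n+1)) = Module.finrank ℝ (EuclideanSpace ℝ (Fin n)) + 1 := by
    rw [finrank_euclideanSpace_fin, Fintype.card_fin]
  have htot : affineSpan ℝ (Set.range v) = ⊤ :=
    hindep.affineSpan_eq_top_iff_card_eq_finrank_add_one.mpr hcard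
  set b : AffineBasis (Fin (n+1)) ℝ (EuclideanSpace ℝ (Fin n)) := ⟨v, hindep, htot⟩ with hbdef
  have hbv : ⇑b = v := rfl
  -- coordinates coincide with lam
  have hcoord : ∀ j x, b.coord j x = lam j x := by
    intro j x
    have hw1 : ∑ k, b.coord k x = 1 := b.sum_coord_apply_eq_one x
    have hx : Finset.univ.affineCombination ℝ v (fun k => b.coord k x) = x :=
      b.affineCombination_coord_eq_self x
    conv_rhs => rw [← hx]
    rw [Finset.map_affineCombination Finset.univ v _ hw1 (lam j)]
    rw [Finset.affineCombination_eq_linear_combination _ _ _ hw1]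
    rw [Finset.sum_eq_single j]
    · rw [smul_eq_mul, Function.comp_apply, hlamv j j, if_pos rfl, mul_one]
    · intro k _ hne
      rw [smul_eq_mul, Function.comp_apply, hlamv j k, if_neg (Ne.symm hne), mul_zero]
    · intro h; exact absurd (Finset.mem_univ j) h
  -- vertices are cube vertices
  have hvmem : ∀ j, v j ∈ cubeVertices n := by
    intro j i
    rw [hv]
    rcases hgpm j i with h | h <;> rw [h] <;> norm_num
  have hvert_cube : ∀ x : EuclideanSpace ℝ (Fin n), x ∈ cubeVertices n → x ∈ unitCube n := by
    intro x hx i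
    rcases hx i with h | h <;> rw [h] <;> norm_num
  -- lower bound for lam on the cube
  have hmin : ∀ x ∈ unitCube n, ∀ j, (1 - (n:ℝ)) * κ ≤ lam j x := by
    intro x hx j
    rw [hlam]
    have hterm : ∀ i : Fin n, -1 ≤ G j i.succ * (2 * x i - 1) := by
      intro i
      have h0 := (hx i).1
      have h1 := (hx i).2
      rcases hgpm j i with h | h <;> rw [h] <;> nlinarith
    have hS : -(n:ℝ) ≤ ∑ i, G j i.succ * (2 * x i - 1) := by
      calc -(n:ℝ) = ∑ _i : Fin n, (-1:ℝ) := by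
            rw [Finset.sum_const, Finset.card_univ, Fintype.card_fin]; simp
        _ ≤ _ := Finset.sum_le_sum fun i _ => hterm i
    nlinarith [mul_nonneg hκpos.le
      (by linarith : (0:ℝ) ≤ (n:ℝ) + ∑ i, G j i.succ * (2 * x i - 1))]
  -- the opposite vertices
  set y : Fin (n+1) → EuclideanSpace ℝ (Fin n) :=
    fun j => WithLp.toLp 2 (fun i => (1 - G j i.succ)/2) with hydef
  have hyv : ∀ j i, y j i = (1 - G j i.succ)/2 := fun j i => rfl
  have hyvert : ∀ j, y j ∈ cubeVertices n := by
    intro j i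
    rw [hyv]
    rcases hgpm j i with h | h <;> rw [h] <;> norm_num
  have hyval : ∀ j, lam j (y j) = (1 - (n:ℝ)) * κ := by
    intro j
    rw [hlam]
    have hterm : ∀ i : Fin n, G j i.succ * (2 * y j i - 1) = -1 := by
      intro i
      rw [hyv]
      have := hgsq j i
      nlinarith
    rw [Finset.sum_congr rfl fun i _ => hterm i]
    rw [Finset.sum_const, Finset.card_univ, Fintype.card_fin]
    simp only [nsmul_eq_mul, mul_neg_one]
    ring
  -- covering
  have hcover : ∀ σ : ℝ, (n:ℝ) ≤ σ → unitCube n ⊆ simplexHomothet v σ := by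
    intro σ hσ x hx
    have hσpos : (0:ℝ) < σ := lt_of_lt_of_le (by linarith) hσ
    refine (mem_simplexHomothet_iff b hσpos x).2 fun j => ?_
    rw [hcoord]
    have h2 : (1 - σ) * κ ≤ (1 - (n:ℝ)) * κ := by
      apply mul_le_mul_of_nonneg_right _ hκpos.le
      linarith
    exact le_trans h2 (hmin x hx j)
  -- xiInd
  have hxi : xiInd (unitCube n) v = n := by
    have hset : {σ : ℝ | 1 ≤ σ ∧ unitCube n ⊆ simplexHomothet v σ} = Set.Ici (n:ℝ) := by
      ext σ
      constructor
      · rintro ⟨h1, hsub⟩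
        have hy0Q : y 0 ∈ unitCube n := hvert_cube _ (hyvert 0)
        have h2 := (mem_simplexHomothet_iff b (lt_of_lt_of_le zero_lt_one h1) (y 0)).1
          (hsub hy0Q) 0
        rw [hcoord, hyval] at h2
        have h3 := (mul_le_mul_iff_of_pos_right hκpos).1 h2
        simp only [Set.mem_Ici]
        linarith
      · intro hσ
        exact ⟨le_trans h1n hσ, hcover σ hσ⟩
    rw [xiInd, hset, csInf_Ici]
  -- alphaInd
  have halpha : alphaInd (unitCube n) v = n := by
    have hset : {σ : ℝ | 0 < σ ∧ ∃ t : EuclideanSpace ℝ (Fin n),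
        unitCube n ⊆ (fun x => t + x) '' simplexHomothet v σ} = Set.Ici (n:ℝ) := by
      ext σ
      constructor
      · rintro ⟨hσ0, t, hsub⟩
        have key : ∀ j, (1 - σ) * κ ≤ (1 - (n:ℝ)) * κ - (lam j).linear t := by
          intro j
          have hyQ := hvert_cube _ (hyvert j)
          obtain ⟨s, hs, hts⟩ := hsub hyQ
          have hmem : y j - t ∈ simplexHomothet v σ := by
            have h4 : y j - t = s := by
              rw [← hts]
              show t + s - t = s
              abel
            rw [h4]; exact hs
          have h2 := (mem_simplexHomothet_iff b hσ0 (y j - t)).1 hmem j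
          rw [hcoord, affine_apply_sub, hyval] at h2
          exact h2
        have hsum := Finset.sum_le_sum (fun j (_ : j ∈ Finset.univ) => key j)
        have hlin : ∑ j, (lam j).linear t = 0 := by
          have h1 : ∀ j, (lam j).linear t = lam j t - lam j 0 := fun j => by
            have := affine_decomp (lam j) t; linarith
          rw [Finset.sum_congr rfl fun j _ => h1 j, Finset.sum_sub_distrib]
          have hone : ∀ x, ∑ j, lam j x = 1 := by
            intro x
            calc ∑ j, lam j x = ∑ j, b.coord j x :=
                  Finset.sum_congr rfl fun j _ => (hcoord j x).symm
              _ = 1 := b.sum_coord_apply_eq_one x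
          rw [hone, hone, sub_self]
        rw [Finset.sum_sub_distrib, hlin, sub_zero] at hsum
        rw [Finset.sum_const, Finset.sum_const, Finset.card_univ, Fintype.card_fin] at hsum
        simp only [nsmul_eq_mul] at hsum
        push_cast at hsum
        simp only [Set.mem_Ici]
        nlinarith [hκ1]
      · intro hσ
        refine ⟨lt_of_lt_of_le (by linarith) hσ, 0, ?_⟩
        have himg : (fun x => (0:EuclideanSpace ℝ (Fin n)) + x) '' simplexHomothet v σ
            = simplexHomothet v σ := by
          simp only [zero_add, Set.image_id']
        rw [himg]
        exact hcover σ hσ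
    rw [alphaInd, hset, csInf_Ici]
  -- simplex inside cube
  have hsubQ : simplexSet v ⊆ unitCube n := by
    rw [simplexSet]
    apply convexHull_min _ (convex_unitCube n)
    rintro x ⟨j, rfl⟩
    exact hvert_cube _ (hvmem j)
  -- xiMin
  have hximin : xiMin n = n := by
    have hmemT : (n:ℝ) ∈ {t : ℝ | ∃ v' : Fin (n + 1) → EuclideanSpace ℝ (Fin n),
        AffineIndependent ℝ v' ∧ simplexSet v' ⊆ unitCube n ∧ t = xiInd (unitCube n) v'} :=
      ⟨v, hindep, hsubQ, hxi.symm⟩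
    have hlow : ∀ t ∈ {t : ℝ | ∃ v' : Fin (n + 1) → EuclideanSpace ℝ (Fin n),
        AffineIndependent ℝ v' ∧ simplexSet v' ⊆ unitCube n ∧ t = xiInd (unitCube n) v'},
        (n:ℝ) ≤ t := by
      rintro t ⟨v', hind', hsub', rfl⟩
      have htot' : affineSpan ℝ (Set.range v') = ⊤ :=
        hind'.affineSpan_eq_top_iff_card_eq_finrank_add_one.mpr hcard
      set b' : AffineBasis (Fin (n+1)) ℝ (EuclideanSpace ℝ (Fin n)) :=
        ⟨v', hind', htot'⟩ with hb'def
      rw [xiInd]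
      apply le_csInf
      · obtain ⟨σ, hσ1, hσsub⟩ := exists_cover b'
        exact ⟨σ, hσ1, hσsub⟩
      · rintro σ ⟨h1, hsub⟩
        apply general_lower_bound hn b' hsub' 0
        intro x hx j
        rw [sub_zero]
        exact (mem_simplexHomothet_iff b' (lt_of_lt_of_le zero_lt_one h1) x).1 (hsub hx) j
    rw [xiMin]
    exact le_antisymm (csInf_le ⟨(n:ℝ), hlow⟩ hmemT) (le_csInf ⟨_, hmemT⟩ hlow)
  -- membership in the simplex via lam
  have hmemiff : ∀ x : EuclideanSpace ℝ (Fin n), x ∈ simplexSet v ↔ ∀ j, 0 ≤ lam j x := by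
    intro x
    constructor
    · intro hxS j
      rw [← hcoord]
      exact (mem_simplexSet_iff b x).1 hxS j
    · intro h
      exact (mem_simplexSet_iff b x).2 fun j => by rw [hcoord]; exact h j
  -- axial diameters
  have haxial : ∀ i, axialDiameter i (simplexSet v) = 1 := by
    intro i
    set x1 : EuclideanSpace ℝ (Fin n) := WithLp.toLp 2 (fun i' => if i' = i then (0:ℝ) else 1/2) with hx1def
    have hx1 : ∀ i', x1 i' = if i' = i then (0:ℝ) else 1/2 := fun _ => rfl
    have hval1 : ∀ j, lam j x1 = κ * (1 + -(G j i.succ)) := by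
      intro j
      rw [hlam]
      congr 2
      have hterm : ∀ i' : Fin n, G j i'.succ * (2 * x1 i' - 1)
          = if i' = i then -(G j i'.succ) else 0 := by
        intro i'
        rw [hx1]
        split_ifs with h
        · ring
        · ring
      rw [Finset.sum_congr rfl fun i' _ => hterm i',
        Finset.sum_ite_eq' Finset.univ i (fun i' => -(G j i'.succ))]
      rw [if_pos (Finset.mem_univ i)]
    have hx1S : x1 ∈ simplexSet v := by
      rw [hmemiff]
      intro j
      rw [hval1]
      rcases hgpm j i with h | h <;> rw [h] <;> nlinarith [hκpos]
    have hx2S : x1 + (1:ℝ) • EuclideanSpace.single i (1:ℝ) ∈ simplexSet v := by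
      rw [hmemiff]
      intro j
      rw [affine_apply_add_single, hlinsingle, hval1]
      rcases hgpm j i with h | h <;> rw [h] <;> nlinarith [hκpos]
    have hbound : ∀ t ∈ {t : ℝ | 0 ≤ t ∧ ∃ x, x ∈ simplexSet v ∧
        x + t • (EuclideanSpace.single i (1 : ℝ)) ∈ simplexSet v}, t ≤ 1 := by
      rintro t ⟨ht0, x, hxS, hx2⟩
      have h1 := (hsubQ hxS i).1
      have h2 := (hsubQ hx2 i).2
      have he : (x + t • EuclideanSpace.single i (1:ℝ)) i = x i + t := by
        simp [PiLp.add_apply, PiLp.smul_apply, EuclideanSpace.single_apply]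
      rw [he] at h2
      linarith
    have hmem1 : (1:ℝ) ∈ {t : ℝ | 0 ≤ t ∧ ∃ x, x ∈ simplexSet v ∧
        x + t • (EuclideanSpace.single i (1 : ℝ)) ∈ simplexSet v} := by
      refine ⟨zero_le_one, x1, hx1S, ?_⟩
      simpa using hx2S
    rw [axialDiameter]
    exact le_antisymm (csSup_le ⟨1, hmem1⟩ hbound) (le_csSup ⟨1, hbound⟩ hmem1)
  -- distances
  have hdist : ∀ j k, j ≠ k → dist (v j) (v k) = Real.sqrt (((n:ℝ)+1)/2) := by
    intro j k hjk
    rw [EuclideanSpace.dist_eq]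
    congr 1
    have hterm : ∀ i : Fin n, dist (v j i) (v k i) ^ 2
        = (1 - G j i.succ * G k i.succ)/2 := by
      intro i
      rw [Real.dist_eq, sq_abs, hv, hv]
      have h1 := hgsq j i
      have h2 := hgsq k i
      linear_combination h1/4 + h2/4
    rw [Finset.sum_congr rfl fun i _ => hterm i, ← Finset.sum_div,
      Finset.sum_sub_distrib, hrow j k, if_neg hjk, Finset.sum_const,
      Finset.card_univ, Fintype.card_fin]
    simp only [nsmul_eq_mul, mul_one]
    ring
  -- uniqueness of minimizing vertex
  have huniq : ∀ j, ∃! z, z ∈ cubeVertices n ∧ lam j z = (1 - (n:ℝ)) / ((n:ℝ) + 1) := by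
    intro j
    have hval : (1 - (n:ℝ)) * κ = (1 - (n:ℝ)) / ((n:ℝ)+1) := by
      rw [hκdef, div_eq_mul_inv]
    refine ⟨y j, ⟨hyvert j, by rw [hyval, hval]⟩, ?_⟩
    rintro z ⟨hzv, hzval⟩
    have hsumz : ∑ i, G j i.succ * (2 * z i - 1) = -(n:ℝ) := by
      rw [hlam, ← hval] at hzval
      have h7 : κ * (1 + ∑ i, G j i.succ * (2 * z i - 1)) = κ * (1 - (n:ℝ)) := by
        rw [hzval]; ring
      have h8 := mul_left_cancel₀ hκpos.ne' h7
      linarith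
    have hterm_ge : ∀ i : Fin n, -1 ≤ G j i.succ * (2 * z i - 1) := by
      intro i
      rcases hzv i with h | h <;> rcases hgpm j i with h' | h' <;> rw [h, h'] <;> norm_num
    have hall := (Finset.sum_eq_sum_iff_of_le (fun i (_ : i ∈ Finset.univ) => hterm_ge i)).1
      (by rw [hsumz, Finset.sum_const, Finset.card_univ, Fintype.card_fin]; simp)
    apply PiLp.ext
    intro i
    have h5 := (hall i (Finset.mem_univ i)).symm
    have h6 := hgsq j i
    rw [hyv]
    linear_combination (G j i.succ / 2) * h5 - (z i - 1/2) * h6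
  exact ⟨v, lam, hindep, hlamv, hvmem, hdist, hxi, halpha, hximin, haxial,
    hcover n le_rfl, huniq⟩

end Aux

end

/-- Theorem 2.1: If `n+1` is an Hadamard number, there exists a regular
simplex `S` with vertices among vertices of `Q_n` (edge length `√((n+1)/2)`) such that
`ξ(S) = α(S) = n`, hence `ξ_n = n`, all axial diameters equal `1`, and `nS` is
circumscribed around `Q_n` with each `(n−1)`-face of `nS` containing exactly one
vertex of `Q_n`. -/
theorem hadamard_gives_perfect_simplex (n : ℕ) (hn : 0 < n)
    (H : Matrix (Fin (n + 1)) (Fin (n + 1)) ℝ)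
    (hHpm : ∀ i j, H i j = 1 ∨ H i j = -1)
    (hH : H * H.transpose = ((n : ℝ) + 1) • 1) :
    ∃ (v : Fin (n + 1) → EuclideanSpace ℝ (Fin n))
      (lam : Fin (n + 1) → (EuclideanSpace ℝ (Fin n) →ᵃ[ℝ] ℝ)),
      AffineIndependent ℝ v ∧ IsLagrangeBasis v lam ∧
      (∀ j, v j ∈ cubeVertices n) ∧
      (∀ j k, j ≠ k → dist (v j) (v k) = Real.sqrt (((n : ℝ) + 1) / 2)) ∧
      xiInd (unitCube n) v = n ∧
      alphaInd (unitCube n) v = n ∧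
      xiMin n = n ∧
      (∀ i, axialDiameter i (simplexSet v) = 1) ∧
      unitCube n ⊆ simplexHomothet v n ∧
      (∀ j, ∃! y, y ∈ cubeVertices n ∧ lam j y = (1 - (n : ℝ)) / ((n : ℝ) + 1)) := by
  have hne : ((n:ℝ)+1) ≠ 0 := by positivity
  have hHsq : ∀ j m, H j m * H j m = 1 := by
    intro j m; rcases hHpm j m with h | h <;> rw [h] <;> norm_num
  set G : Matrix (Fin (n+1)) (Fin (n+1)) ℝ :=
    Matrix.of (fun j m => H j m * H j 0 * H 0 m * H 0 0) with hGdef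
  have hG : ∀ j m, G j m = H j m * H j 0 * H 0 m * H 0 0 := fun j m => rfl
  have hpm : ∀ j m, G j m = 1 ∨ G j m = -1 := by
    intro j m; rw [hG]
    rcases hHpm j m with h1 | h1 <;> rcases hHpm j 0 with h2 | h2 <;>
      rcases hHpm 0 m with h3 | h3 <;> rcases hHpm 0 0 with h4 | h4 <;>
      rw [h1, h2, h3, h4] <;> norm_num
  have hcol : ∀ j, G j 0 = 1 := by
    intro j; rw [hG]
    linear_combination (H 0 0 * H 0 0) * hHsq j 0 + hHsq 0 0
  have hHH : ∀ j k, ∑ m, H j m * H k m = if j = k then ((n:ℝ)+1) else 0 := by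
    intro j k
    have h := congrFun (congrFun hH j) k
    simp only [Matrix.mul_apply, Matrix.transpose_apply, Matrix.smul_apply,
      Matrix.one_apply, smul_eq_mul] at h
    rw [h]
    split_ifs <;> ring
  have hinv : H * (((n:ℝ)+1)⁻¹ • H.transpose) = 1 := by
    rw [Matrix.mul_smul, hH, smul_smul, inv_mul_cancel₀ hne, one_smul]
  have hinv2 : (((n:ℝ)+1)⁻¹ • H.transpose) * H = 1 := mul_eq_one_comm.mp hinv
  have hHtH : ∀ m l, ∑ j, H j m * H j l = if m = l then ((n:ℝ)+1) else 0 := by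
    intro m l
    have h := congrFun (congrFun hinv2 m) l
    simp only [Matrix.mul_apply, Matrix.smul_apply, Matrix.transpose_apply,
      smul_eq_mul, Matrix.one_apply] at h
    have h3 : ∑ j, ((n:ℝ)+1)⁻¹ * (H j m * H j l) = if m = l then 1 else 0 := by
      rw [← h]; exact Finset.sum_congr rfl fun j _ => by ring
    rw [← Finset.mul_sum] at h3
    calc ∑ j, H j m * H j l
        = ((n:ℝ)+1) * (((n:ℝ)+1)⁻¹ * ∑ j, H j m * H j l) := by
          rw [← mul_assoc, mul_inv_cancel₀ hne, one_mul]
      _ = ((n:ℝ)+1) * (if m = l then 1 else 0) := by rw [h3]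
      _ = if m = l then ((n:ℝ)+1) else 0 := by split_ifs <;> ring
  have hGG : ∀ j k, ∑ m, G j m * G k m = if j = k then ((n:ℝ)+1) else 0 := by
    intro j k
    have hstep : ∀ m, G j m * G k m = (H j 0 * H k 0) * (H j m * H k m) := by
      intro m
      rw [hG, hG]
      linear_combination (H j m * H k m * H j 0 * H k 0 * (H 0 0 * H 0 0)) * hHsq 0 m
        + (H j m * H k m * H j 0 * H k 0) * hHsq 0 0
    rw [Finset.sum_congr rfl fun m _ => hstep m, ← Finset.mul_sum, hHH j k]
    split_ifs with hjk
    · subst hjk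
      linear_combination ((n:ℝ)+1) * hHsq j 0
    · ring
  have hGtG : ∀ m l, ∑ j, G j m * G j l = if m = l then ((n:ℝ)+1) else 0 := by
    intro m l
    have hstep : ∀ j, G j m * G j l = (H 0 m * H 0 l) * (H j m * H j l) := by
      intro j
      rw [hG, hG]
      linear_combination (H j m * H j l * H 0 m * H 0 l * (H 0 0 * H 0 0)) * hHsq j 0
        + (H j m * H j l * H 0 m * H 0 l) * hHsq 0 0
    rw [Finset.sum_congr rfl fun j _ => hstep j, ← Finset.mul_sum, hHtH m l]
    split_ifs with hml
    · subst hml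
      linear_combination ((n:ℝ)+1) * hHsq 0 m
    · ring
  exact Aux.main hn G hpm hcol hGG hGtG
end

section
/- Let S be a nondegenerate n-dimensional simplex contained in the unit cube Q_n. Then n ≤ Σ_{i=1}^{n} 1/d_i(S) = α(S) ≤ ξ(S); in particular ξ_n ≥ n. Moreover, if ξ(S) = n, then α(S) = n and d_i(S) = 1 for all i. -/
open Set MeasureTheory Finset Metric

noncomputable section
open Finset
namespace AlphaXiAux

variable {n : ℕ} (b : AffineBasis (Fin (n+1)) ℝ (EuclideanSpace ℝ (Fin n)))

/-- coefficient of `x i` in the `j`-th barycentric coordinate -/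
def cb (j : Fin (n+1)) (i : Fin n) : ℝ := (b.coord j).linear (EuclideanSpace.single i 1)

def A (i : Fin n) : ℝ := ∑ j, max (-(cb b j i)) 0

def N (j : Fin (n+1)) : ℝ := ∑ i, max (-(cb b j i)) 0

def M (j : Fin (n+1)) : ℝ := ∑ i, |cb b j i|

lemma mem_cube {x : EuclideanSpace ℝ (Fin n)} :
    x ∈ unitCube n ↔ ∀ i, 0 ≤ x i ∧ x i ≤ 1 := by
  simp [unitCube, Set.mem_Icc]

lemma mem_simplex {x : EuclideanSpace ℝ (Fin n)} :
    x ∈ simplexSet ⇑b ↔ ∀ j, 0 ≤ b.coord j x := by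
  rw [simplexSet, b.convexHull_eq_nonneg_coord]; rfl

lemma coord_add (x u : EuclideanSpace ℝ (Fin n)) (j : Fin (n+1)) :
    b.coord j (x + u) = b.coord j x + (b.coord j).linear u := by
  have h := (b.coord j).map_vadd x u
  rw [vadd_eq_add, vadd_eq_add] at h
  rw [add_comm x u, h, add_comm]

lemma lin_eq_coord (u : EuclideanSpace ℝ (Fin n)) (j : Fin (n+1)) :
    (b.coord j).linear u = b.coord j u - b.coord j 0 := by
  have h := coord_add b 0 u j
  rw [zero_add] at h
  rw [h]; ring

lemma lin_eq (u : EuclideanSpace ℝ (Fin n)) (j : Fin (n+1)) :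
    (b.coord j).linear u = ∑ i, u i * cb b j i := by
  conv_lhs => rw [← (by ext k; rw [WithLp.ofLp_sum, Finset.sum_apply]; simp [EuclideanSpace.single_apply] :
    ∑ i, u i • EuclideanSpace.single i (1:ℝ) = u)]
  rw [map_sum]
  simp [cb, smul_eq_mul]

lemma sum_lin_zero (u : EuclideanSpace ℝ (Fin n)) :
    ∑ j, (b.coord j).linear u = 0 := by
  have h : ∑ j, (b.coord j).linear u
      = ∑ j, (b.coord j (0 + u) - b.coord j 0) :=
    Finset.sum_congr rfl fun j _ => by rw [coord_add]; ring
  rw [h, Finset.sum_sub_distrib, b.sum_coord_apply_eq_one, b.sum_coord_apply_eq_one, sub_self]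

lemma lin_comb (u : EuclideanSpace ℝ (Fin n)) :
    ∑ j, (b.coord j).linear u • (b j) = u := by
  have h1 := b.linear_combination_coord_eq_self (0 + u)
  have h2 := b.linear_combination_coord_eq_self 0
  have h3 : ∀ j, b.coord j (0 + u) • (b j)
      = b.coord j 0 • (b j) + (b.coord j).linear u • (b j) := by
    intro j; rw [coord_add, add_smul]
  rw [Finset.sum_congr rfl fun j _ => h3 j, Finset.sum_add_distrib, h2, zero_add] at h1
  simpa using h1

lemma one_eq (i : Fin n) : ∑ j, cb b j i * (b j i) = 1 := by
  have h := congrArg (fun x => x i) (lin_comb b (EuclideanSpace.single i 1))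
  simp only [WithLp.ofLp_sum, Finset.sum_apply] at h
  simpa [cb, EuclideanSpace.single_apply] using h

lemma sum_cb_zero (i : Fin n) : ∑ j, cb b j i = 0 := sum_lin_zero b _

lemma A_pos (i : Fin n) : 0 < A b i := by
  rcases lt_or_ge 0 (A b i) with h | h
  · exact h
  · exfalso
    have hA0 : A b i = 0 :=
      le_antisymm h (Finset.sum_nonneg fun j _ => le_max_right _ _)
    have hmax : ∀ j ∈ Finset.univ, max (-(cb b j i)) 0 = 0 :=
      (Finset.sum_eq_zero_iff_of_nonneg fun j _ => le_max_right _ _).mp hA0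
    have hge : ∀ j ∈ Finset.univ, (0:ℝ) ≤ cb b j i := by
      intro j hj
      have := le_of_max_le_left (le_of_eq (hmax j hj))
      linarith
    have hzero : ∀ j ∈ Finset.univ, cb b j i = 0 :=
      (Finset.sum_eq_zero_iff_of_nonneg hge).mp (sum_cb_zero b i)
    have h1 := one_eq b i
    rw [Finset.sum_congr rfl fun j hj => by rw [hzero j hj, zero_mul]] at h1
    simp at h1



lemma lin_ge {y : EuclideanSpace ℝ (Fin n)} (hy : y ∈ unitCube n) (j : Fin (n+1)) :
    -(N b j) ≤ (b.coord j).linear y := by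
  rw [lin_eq, N, ← Finset.sum_neg_distrib]
  refine Finset.sum_le_sum fun i _ => ?_
  obtain ⟨h0, h1⟩ := mem_cube.mp hy i
  rcases le_total (cb b j i) 0 with h | h
  · rw [max_eq_left (by linarith)]
    nlinarith
  · rw [max_eq_right (by linarith)]
    nlinarith

lemma lin_attain (j : Fin (n+1)) :
    ∃ y, y ∈ unitCube n ∧ (b.coord j).linear y = -(N b j) := by
  classical
  refine ⟨WithLp.toLp 2 (fun i => if cb b j i < 0 then 1 else 0 : Fin n → ℝ), ?_, ?_⟩
  · rw [mem_cube]
    intro i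
    simp only [PiLp.toLp_apply]
    split <;> norm_num
  · rw [lin_eq, N, ← Finset.sum_neg_distrib]
    refine Finset.sum_congr rfl fun i _ => ?_
    simp only [PiLp.toLp_apply]
    rcases lt_or_ge (cb b j i) 0 with h | h
    · rw [if_pos h, max_eq_left (by linarith)]; ring
    · rw [if_neg (not_lt.mpr h), max_eq_right (by linarith)]; ring

lemma lin_abs_ge {u : EuclideanSpace ℝ (Fin n)} (hu : ∀ i, |u i| ≤ 1) (j : Fin (n+1)) :
    -(M b j) ≤ (b.coord j).linear u := by
  rw [lin_eq, M, ← Finset.sum_neg_distrib]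
  refine Finset.sum_le_sum fun i _ => ?_
  have h1 := abs_mul (u i) (cb b j i)
  have h2 : |u i * cb b j i| ≤ |cb b j i| := by
    rw [h1]
    exact mul_le_of_le_one_left (abs_nonneg _) (hu i)
  have := neg_abs_le (u i * cb b j i)
  linarith

lemma M_nonneg (j : Fin (n+1)) : 0 ≤ M b j :=
  Finset.sum_nonneg fun i _ => abs_nonneg _

lemma N_nonneg (j : Fin (n+1)) : 0 ≤ N b j :=
  Finset.sum_nonneg fun i _ => le_max_right _ _

lemma coord_centroid (j : Fin (n+1)) :
    b.coord j (simplexCentroid ⇑b) = ((n:ℝ)+1)⁻¹ := by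
  rw [simplexCentroid, b.coord_apply_centroid (Finset.mem_univ j)]
  norm_num

lemma centroid_mem : simplexCentroid ⇑b ∈ simplexSet ⇑b := by
  rw [mem_simplex]
  intro j
  rw [coord_centroid]
  positivity

/-- membership in the axial-segment set -/
lemma mem_T (i : Fin n) :
    (1 / A b i) ∈ {t : ℝ | 0 ≤ t ∧ ∃ x, x ∈ simplexSet ⇑b ∧
      x + t • (EuclideanSpace.single i (1 : ℝ)) ∈ simplexSet ⇑b} := by
  have hA := A_pos b i
  set μ : Fin (n+1) → ℝ := fun j => max (-(cb b j i)) 0 / A b i with hμ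
  have hμ1 : ∑ j, μ j = 1 := by
    rw [hμ, ← Finset.sum_div, ← A, div_self hA.ne']
  set x := Finset.univ.affineCombination ℝ ⇑b μ with hx
  have hcoord : ∀ j, b.coord j x = μ j := fun j =>
    b.coord_apply_combination_of_mem (Finset.mem_univ j) hμ1
  refine ⟨by positivity, x, ?_, ?_⟩
  · rw [mem_simplex]
    intro j
    rw [hcoord]
    positivity
  · rw [mem_simplex]
    intro j
    rw [coord_add, hcoord, _root_.map_smul, smul_eq_mul, ← cb]
    have key : μ j + 1 / A b i * cb b j i = (max (-(cb b j i)) 0 + cb b j i) / A b i := by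
      rw [hμ]; field_simp
    rw [key]
    have : 0 ≤ max (-(cb b j i)) 0 + cb b j i := by
      have := le_max_left (-(cb b j i)) 0
      linarith
    positivity

lemma ub_T (i : Fin n) :
    ∀ t ∈ {t : ℝ | 0 ≤ t ∧ ∃ x, x ∈ simplexSet ⇑b ∧
      x + t • (EuclideanSpace.single i (1 : ℝ)) ∈ simplexSet ⇑b}, t ≤ 1 / A b i := by
  rintro t ⟨ht0, x, hx, hx'⟩
  have hA := A_pos b i
  rw [mem_simplex] at hx hx'
  have key : ∀ j ∈ Finset.univ, t * max (-(cb b j i)) 0 ≤ b.coord j x := by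
    intro j _
    have h2 := hx' j
    rw [coord_add, _root_.map_smul, smul_eq_mul, ← cb] at h2
    rcases le_total (cb b j i) 0 with h | h
    · rw [max_eq_left (by linarith)]
      nlinarith
    · rw [max_eq_right (by linarith)]
      nlinarith [hx j]
  have hsum : t * A b i ≤ 1 := by
    calc t * A b i = ∑ j, t * max (-(cb b j i)) 0 := by rw [A, Finset.mul_sum]
    _ ≤ ∑ j, b.coord j x := Finset.sum_le_sum key
    _ = 1 := b.sum_coord_apply_eq_one x
  rw [le_div_iff₀ hA]
  linarith

lemma axial_eq (i : Fin n) :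
    axialDiameter i (simplexSet ⇑b) = 1 / A b i := by
  rw [axialDiameter]
  exact le_antisymm (csSup_le ⟨_, mem_T b i⟩ (ub_T b i))
    (le_csSup ⟨1 / A b i, ub_T b i⟩ (mem_T b i))

lemma one_le_A (hsub : simplexSet ⇑b ⊆ unitCube n) (i : Fin n) : 1 ≤ A b i := by
  have hA := A_pos b i
  obtain ⟨_, x, hx, hx'⟩ := mem_T b i
  have h1 := (mem_cube.mp (hsub hx) i).1
  have h2 := (mem_cube.mp (hsub hx') i).2
  have h3 : (x + (1 / A b i) • (EuclideanSpace.single i (1:ℝ))) i = x i + 1 / A b i := by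
    simp [EuclideanSpace.single_apply]
  rw [h3] at h2
  exact (div_le_one hA).mp (by linarith)



lemma beta_eq : ∑ i, A b i = ∑ j, N b j := by
  simp only [A, N]
  exact Finset.sum_comm

lemma beta_pos (hn : 0 < n) : 0 < ∑ j, N b j := by
  rw [← beta_eq]
  haveI : Nonempty (Fin n) := Fin.pos_iff_nonempty.mp hn
  exact Finset.sum_pos (fun i _ => A_pos b i) Finset.univ_nonempty

lemma alpha_mem (hn : 0 < n) :
    ∃ t, unitCube n ⊆ (fun x => t + x) '' simplexHomothet ⇑b (∑ j, N b j) := by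
  set β := ∑ j, N b j with hβdef
  have hβ : 0 < β := beta_pos b hn
  set c₀ := simplexCentroid ⇑b with hc₀
  set w : Fin (n+1) → ℝ :=
    fun j => β * b.coord j c₀ - (b.coord j).linear c₀ - N b j + b.coord j 0 with hw
  have hw1 : ∑ j, w j = 1 := by
    rw [hw]
    rw [Finset.sum_add_distrib, Finset.sum_sub_distrib, Finset.sum_sub_distrib,
      ← Finset.mul_sum, b.sum_coord_apply_eq_one, b.sum_coord_apply_eq_one,
      sum_lin_zero, ← hβdef]
    ring
  set t := Finset.univ.affineCombination ℝ ⇑b w with ht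
  have hcoord_t : ∀ j, b.coord j t = w j := fun j =>
    b.coord_apply_combination_of_mem (Finset.mem_univ j) hw1
  have hlin_t : ∀ j, (b.coord j).linear t
      = β * b.coord j c₀ - (b.coord j).linear c₀ - N b j := by
    intro j; rw [lin_eq_coord, hcoord_t, hw]; ring
  refine ⟨t, fun y hy => ?_⟩
  set z := c₀ + β⁻¹ • (y - t - c₀) with hz
  have hzmem : z ∈ simplexSet ⇑b := by
    rw [mem_simplex]
    intro j
    have hcz : b.coord j z = β⁻¹ * ((b.coord j).linear y + N b j) := by
      rw [hz, coord_add, _root_.map_smul, smul_eq_mul, map_sub, map_sub, hlin_t,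
        coord_centroid]
      field_simp
      ring
    rw [hcz]
    have := lin_ge b hy j
    exact mul_nonneg (inv_nonneg.mpr hβ.le) (by linarith)
  simp only [simplexHomothet, homothet, Set.mem_image, ← hc₀]
  refine ⟨c₀ + β • (z - c₀), ⟨z, hzmem, rfl⟩, ?_⟩
  rw [hz, add_sub_cancel_left, smul_smul, mul_inv_cancel₀ hβ.ne', one_smul]
  abel

lemma alpha_lb {σ : ℝ} (hσ : 0 ≤ σ) {t : EuclideanSpace ℝ (Fin n)}
    (hQ : unitCube n ⊆ (fun x => t + x) '' simplexHomothet ⇑b σ) :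
    ∑ j, N b j ≤ σ := by
  set c₀ := simplexCentroid ⇑b with hc₀
  have key : ∀ j ∈ Finset.univ, N b j ≤
      b.coord j 0 - b.coord j c₀ - (b.coord j).linear t + σ * b.coord j c₀ := by
    intro j _
    obtain ⟨y, hy, hylin⟩ := lin_attain b j
    obtain ⟨a, ha, hay⟩ := hQ hy
    simp only [simplexHomothet, homothet, Set.mem_image, ← hc₀] at ha
    obtain ⟨z, hz, rfl⟩ := ha
    have hz0 : 0 ≤ b.coord j z := (mem_simplex b).mp hz j
    have hlinzc : (b.coord j).linear (z - c₀) = b.coord j z - b.coord j c₀ := by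
      have h := coord_add b c₀ (z - c₀) j
      rw [show c₀ + (z - c₀) = z from by abel] at h
      linarith
    have hcy : b.coord j y = -(N b j) + b.coord j 0 := by
      rw [lin_eq_coord] at hylin; linarith
    have hcy2 : b.coord j y = b.coord j c₀ +
        ((b.coord j).linear t + σ * (b.coord j z - b.coord j c₀)) := by
      rw [← hay]
      show b.coord j (t + (c₀ + σ • (z - c₀))) = _
      rw [show t + (c₀ + σ • (z - c₀)) = c₀ + (t + σ • (z - c₀)) from by abel,
        coord_add, map_add, _root_.map_smul, smul_eq_mul, hlinzc]
    nlinarith [mul_nonneg hσ hz0]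
  have hsum := Finset.sum_le_sum key
  rw [Finset.sum_add_distrib, Finset.sum_sub_distrib, Finset.sum_sub_distrib,
    ← Finset.mul_sum, b.sum_coord_apply_eq_one, b.sum_coord_apply_eq_one,
    sum_lin_zero] at hsum
  linarith

lemma xi_mem (hsub : simplexSet ⇑b ⊆ unitCube n) :
    1 ≤ max 1 (((n:ℝ)+1) * ∑ j, M b j) ∧
    unitCube n ⊆ simplexHomothet ⇑b (max 1 (((n:ℝ)+1) * ∑ j, M b j)) := by
  set σ₀ := max 1 (((n:ℝ)+1) * ∑ j, M b j) with hσ₀def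
  have h1 : (1:ℝ) ≤ σ₀ := le_max_left _ _
  have hpos : (0:ℝ) < σ₀ := by linarith
  have hn1 : (0:ℝ) < (n:ℝ)+1 := by positivity
  have hMsum : ∀ j, M b j ≤ ∑ j', M b j' := fun j =>
    Finset.single_le_sum (fun j' _ => M_nonneg b j') (Finset.mem_univ j)
  have hbound : ∀ j, ((n:ℝ)+1) * M b j ≤ σ₀ := fun j =>
    le_trans (mul_le_mul_of_nonneg_left (hMsum j) hn1.le) (le_max_right 1 _)
  refine ⟨h1, fun y hy => ?_⟩
  set c₀ := simplexCentroid ⇑b with hc₀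
  set z := c₀ + σ₀⁻¹ • (y - c₀) with hz
  have hc₀Q := hsub (centroid_mem b)
  have habs : ∀ i, |(y - c₀) i| ≤ 1 := by
    intro i
    have ha := mem_cube.mp hy i
    have hb' := mem_cube.mp hc₀Q i
    have hsubi : (y - c₀) i = y i - c₀ i := rfl
    rw [hsubi, abs_le]
    constructor <;> linarith [ha.1, ha.2, hb'.1, hb'.2]
  have hzmem : z ∈ simplexSet ⇑b := by
    rw [mem_simplex]; intro j
    have hcz : b.coord j z = ((n:ℝ)+1)⁻¹ + σ₀⁻¹ * (b.coord j).linear (y - c₀) := by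
      rw [hz, coord_add, _root_.map_smul, smul_eq_mul, hc₀, coord_centroid]
    have hM := lin_abs_ge b habs j
    have hfrac : σ₀⁻¹ * M b j ≤ ((n:ℝ)+1)⁻¹ := by
      have h2 : M b j ≤ σ₀ * ((n:ℝ)+1)⁻¹ := by
        rw [← div_eq_mul_inv, le_div_iff₀ hn1]
        linarith [hbound j]
      calc σ₀⁻¹ * M b j ≤ σ₀⁻¹ * (σ₀ * ((n:ℝ)+1)⁻¹) :=
            mul_le_mul_of_nonneg_left h2 (inv_nonneg.mpr hpos.le)
        _ = ((n:ℝ)+1)⁻¹ := by rw [← mul_assoc, inv_mul_cancel₀ hpos.ne', one_mul]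
    have hlb : σ₀⁻¹ * (-(M b j)) ≤ σ₀⁻¹ * (b.coord j).linear (y - c₀) :=
      mul_le_mul_of_nonneg_left hM (inv_nonneg.mpr hpos.le)
    rw [hcz]
    have hneg : σ₀⁻¹ * (-(M b j)) = -(σ₀⁻¹ * M b j) := by ring
    linarith [hlb, hfrac]
  simp only [simplexHomothet, homothet, Set.mem_image, ← hc₀]
  refine ⟨z, hzmem, ?_⟩
  rw [hz, add_sub_cancel_left, smul_smul, mul_inv_cancel₀ hpos.ne', one_smul]
  abel

lemma alpha_eq (hn : 0 < n) :
    alphaInd (unitCube n) ⇑b = ∑ i, A b i := by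
  rw [beta_eq]
  have hβ := beta_pos b hn
  obtain ⟨t, ht⟩ := alpha_mem b hn
  apply le_antisymm
  · exact csInf_le ⟨0, fun σ hσ => hσ.1.le⟩ ⟨hβ, t, ht⟩
  · refine le_csInf ⟨_, hβ, t, ht⟩ ?_
    rintro σ ⟨hσ, t', hQ⟩
    exact alpha_lb b hσ.le hQ

lemma xi_ge (hsub : simplexSet ⇑b ⊆ unitCube n) :
    ∑ i, A b i ≤ xiInd (unitCube n) ⇑b := by
  rw [beta_eq]
  obtain ⟨h1, h2⟩ := xi_mem b hsub
  refine le_csInf ⟨_, h1, h2⟩ ?_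
  rintro σ ⟨hσ1, hσ2⟩
  refine alpha_lb b (by linarith) (t := 0) fun y hy => ?_
  exact ⟨y, hσ2 hy, zero_add y⟩



lemma master (hn : 0 < n) (v : Fin (n + 1) → EuclideanSpace ℝ (Fin n))
    (hv : AffineIndependent ℝ v) (hsub : simplexSet v ⊆ unitCube n) :
    ∃ A : Fin n → ℝ, (∀ i, 1 ≤ A i) ∧
      (∀ i, axialDiameter i (simplexSet v) = 1 / A i) ∧
      alphaInd (unitCube n) v = ∑ i, A i ∧
      (∑ i, A i) ≤ xiInd (unitCube n) v := by
  have htot : affineSpan ℝ (Set.range v) = ⊤ := by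
    rw [hv.affineSpan_eq_top_iff_card_eq_finrank_add_one]
    simp [finrank_euclideanSpace_fin]
  let b : AffineBasis (Fin (n+1)) ℝ (EuclideanSpace ℝ (Fin n)) := ⟨v, hv, htot⟩
  have hb : ⇑b = v := rfl
  refine ⟨A b, one_le_A b (hb ▸ hsub), ?_, ?_, ?_⟩
  · intro i; rw [← hb]; exact axial_eq b i
  · rw [← hb]; exact alpha_eq b hn
  · rw [← hb]; exact xi_ge b (hb ▸ hsub)

end AlphaXiAux

end
/-- For a nondegenerate simplex `S ⊆ Q_n`:
`n ≤ Σ_i 1/d_i(S) = α(S) ≤ ξ(S)`; in particular `ξ_n ≥ n`; and if `ξ(S) = n` then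
`α(S) = n` and all `d_i(S) = 1`. -/
theorem alpha_xi_ge_dim (n : ℕ) (hn : 0 < n)
    (v : Fin (n + 1) → EuclideanSpace ℝ (Fin n)) (hv : AffineIndependent ℝ v)
    (hsub : simplexSet v ⊆ unitCube n) :
    (n : ℝ) ≤ ∑ i : Fin n, 1 / axialDiameter i (simplexSet v) ∧
    (∑ i : Fin n, 1 / axialDiameter i (simplexSet v)) = alphaInd (unitCube n) v ∧
    alphaInd (unitCube n) v ≤ xiInd (unitCube n) v ∧
    (n : ℝ) ≤ xiMin n ∧
    (xiInd (unitCube n) v = n →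
      alphaInd (unitCube n) v = n ∧ ∀ i, axialDiameter i (simplexSet v) = 1) := by
  obtain ⟨A, hA1, hAd, hAa, hAx⟩ := AlphaXiAux.master hn v hv hsub
  have hsum_eq : ∑ i : Fin n, 1 / axialDiameter i (simplexSet v) = ∑ i, A i := by
    refine Finset.sum_congr rfl fun i _ => ?_
    rw [hAd i, one_div_one_div]
  have hn_le : (n : ℝ) ≤ ∑ i, A i := by
    calc (n : ℝ) = ∑ _i : Fin n, (1:ℝ) := by simp
      _ ≤ ∑ i, A i := Finset.sum_le_sum fun i _ => hA1 i
  refine ⟨by rw [hsum_eq]; exact hn_le, by rw [hsum_eq, hAa], by rw [hAa]; exact hAx, ?_, ?_⟩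
  · -- n ≤ xiMin n
    refine le_csInf ⟨_, v, hv, hsub, rfl⟩ ?_
    rintro t ⟨v', hv', hsub', rfl⟩
    obtain ⟨A', hA1', _, _, hAx'⟩ := AlphaXiAux.master hn v' hv' hsub'
    calc (n : ℝ) = ∑ _i : Fin n, (1:ℝ) := by simp
      _ ≤ ∑ i, A' i := Finset.sum_le_sum fun i _ => hA1' i
      _ ≤ _ := hAx'
  · intro hxi
    have hsumA : ∑ i, A i = n := le_antisymm (by rw [← hxi]; exact hAx) hn_le
    have hAone : ∀ i, A i = 1 := by
      intro i
      by_contra hne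
      have hi : 1 < A i := lt_of_le_of_ne (hA1 i) (Ne.symm hne)
      have : (n:ℝ) < ∑ i, A i := by
        calc (n:ℝ) = ∑ _i : Fin n, (1:ℝ) := by simp
          _ < ∑ i, A i := by
            refine Finset.sum_lt_sum (fun j _ => hA1 j) ⟨i, Finset.mem_univ i, hi⟩
      linarith [hsumA]
    refine ⟨by rw [hAa, hsumA], fun i => ?_⟩
    rw [hAd i, hAone i, one_div_one]
end
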